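/- arXiv:1811.04197 — 2 statements merged into one kernel-verified Lean document; each statement's English description precedes it below -/
import Mathlib

section
/- Let p be a strictly positive N×M matrix of prices and q a quantity matrix, and let w_{ij} = p_{ij} q_{ij} / Σ_{n=1}^N p_{nj} q_{nj} denote expenditure shares and w*_{ij} = w_{ij} / Σ_{m=1}^M w_{im}. Consider the Iklé–Dikhanov–Balk (IDB) system: 1/PPP_j = Σ_{n=1}^N w_{nj} (P_n / p_{nj}) for j = 1,…,M and 1/P_i = Σ_{m=1}^M w*_{im} (PPP_m / p_{im}) for i = 1,…,N. Then a strictly positive solution (PPP, P), unique up to the rescaling (PPP, P) ↦ (γ·PPP, (1/γ)·P) for γ > 0, exists if and only if the quantity matrix q is connected. -/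
open Finset

/-- Connectedness of the quantity matrix `q`. -/
def QConnected {N M : ℕ} (q : Fin N → Fin M → ℝ) : Prop :=
  ∀ J : Finset (Fin M), J.Nonempty → J ≠ Finset.univ →
    ∃ j ∈ J, ∃ l ∉ J, ∃ k, 0 < q k j ∧ 0 < q k l

/-- `(PPP, P)` solves the Iklé–Dikhanov–Balk system with expenditure-share weights `w`
and normalized expenditure-share weights `wstar`. -/
def IDBSol {N M : ℕ} (p : Fin N → Fin M → ℝ) (w wstar : Fin N → Fin M → ℝ)
    (PPP : Fin M → ℝ) (P : Fin N → ℝ) : Prop :=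
  (∀ j, (PPP j)⁻¹ = ∑ n, w n j * (P n / p n j)) ∧
  (∀ i, (P i)⁻¹ = ∑ m, wstar i m * (PPP m / p i m))

theorem unique_margins {N M : ℕ} (hM : 0 < M)
    (q A : Fin N → Fin M → ℝ)
    (hApos : ∀ i j, 0 < A i j ↔ 0 < q i j)
    (hA0 : ∀ i j, 0 ≤ A i j)
    (hqrow : ∀ i, ∃ j, 0 < q i j)
    (hqc : QConnected q)
    (x x' : Fin M → ℝ) (y y' : Fin N → ℝ)
    (hx : ∀ j, 0 < x j) (hy : ∀ i, 0 < y i)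
    (hx' : ∀ j, 0 < x' j) (hy' : ∀ i, 0 < y' i)
    (hcol : ∀ j, ∑ i, A i j * (y i * x j) = 1)
    (hcol' : ∀ j, ∑ i, A i j * (y' i * x' j) = 1)
    (hrow : ∀ i, ∑ j, A i j * (y i * x j) = ∑ j, A i j * (y' i * x' j)) :
    ∃ γ : ℝ, 0 < γ ∧ (∀ j, x' j = γ * x j) ∧ (∀ i, y' i = γ⁻¹ * y i) := by
  classical
  set T : Fin N → Fin M → ℝ := fun i j => A i j * (y i * x j) with hT
  set T' : Fin N → Fin M → ℝ := fun i j => A i j * (y' i * x' j) with hT'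
  set L : Fin N → Fin M → ℝ :=
    fun i j => (Real.log (y' i) - Real.log (y i)) + (Real.log (x' j) - Real.log (x j)) with hL
  have hTexp : ∀ i j, T' i j = T i j * Real.exp (L i j) := by
    intro i j
    have : Real.exp (L i j) = (y' i / y i) * (x' j / x j) := by
      rw [hL, Real.exp_add, Real.exp_sub, Real.exp_sub, Real.exp_log (hy' i),
        Real.exp_log (hy i), Real.exp_log (hx' j), Real.exp_log (hx j)]
    rw [this, hT, hT']
    field_simp [(hy i).ne', (hx j).ne']
  have hT0 : ∀ i j, 0 ≤ T i j := fun i j =>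
    mul_nonneg (hA0 i j) (mul_nonneg (hy i).le (hx j).le)
  have hT'0 : ∀ i j, 0 ≤ T' i j := fun i j =>
    mul_nonneg (hA0 i j) (mul_nonneg (hy' i).le (hx' j).le)
  -- each combined term nonneg
  have hterm1 : ∀ i j, 0 ≤ T' i j - T i j - T i j * L i j := by
    intro i j
    have h1 : 1 + L i j ≤ Real.exp (L i j) := by
      have := Real.add_one_le_exp (L i j); linarith
    have := mul_le_mul_of_nonneg_left h1 (hT0 i j)
    rw [hTexp i j]; nlinarith [hT0 i j]
  have hterm2 : ∀ i j, 0 ≤ T i j - T' i j + T' i j * L i j := by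
    intro i j
    have hTT : T i j = T' i j * Real.exp (-L i j) := by
      rw [hTexp i j, mul_assoc, ← Real.exp_add]; simp
    have h1 : 1 + (-L i j) ≤ Real.exp (-L i j) := by
      have := Real.add_one_le_exp (-L i j); linarith
    have := mul_le_mul_of_nonneg_left h1 (hT'0 i j)
    rw [hTT]; nlinarith [hT'0 i j]
  -- the total sum is zero
  have hsum : ∑ i, ∑ j, ((T' i j - T i j - T i j * L i j) + (T i j - T' i j + T' i j * L i j)) = 0 := by
    have h1 : ∀ i j, (T' i j - T i j - T i j * L i j) + (T i j - T' i j + T' i j * L i j)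
        = (T' i j - T i j) * ((Real.log (y' i) - Real.log (y i)) + (Real.log (x' j) - Real.log (x j))) := by
      intro i j; rw [hL]; ring
    calc ∑ i, ∑ j, ((T' i j - T i j - T i j * L i j) + (T i j - T' i j + T' i j * L i j))
        = ∑ i, ∑ j, ((T' i j - T i j) * (Real.log (y' i) - Real.log (y i))
            + (T' i j - T i j) * (Real.log (x' j) - Real.log (x j))) := by
          refine Finset.sum_congr rfl fun i _ => Finset.sum_congr rfl fun j _ => ?_
          rw [h1]; ring
      _ = ∑ i, ((∑ j, (T' i j - T i j)) * (Real.log (y' i) - Real.log (y i)))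
            + ∑ j, ((∑ i, (T' i j - T i j)) * (Real.log (x' j) - Real.log (x j))) := by
          simp only [Finset.sum_add_distrib]
          refine congrArg₂ (· + ·) ?_ ?_
          · exact Finset.sum_congr rfl fun i _ => (Finset.sum_mul ..).symm
          · rw [Finset.sum_comm]
            exact Finset.sum_congr rfl fun j _ => (Finset.sum_mul ..).symm
      _ = 0 := by
          have e1 : ∀ i, ∑ j, (T' i j - T i j) = 0 := by
            intro i; rw [Finset.sum_sub_distrib]
            rw [hT, hT', ← hrow i]; ring
          have e2 : ∀ j, ∑ i, (T' i j - T i j) = 0 := by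
            intro j; rw [Finset.sum_sub_distrib]
            rw [hT, hT', hcol j, hcol' j]; ring
          simp [e1, e2]
  have hzero : ∀ i j, (T' i j - T i j - T i j * L i j) + (T i j - T' i j + T' i j * L i j) = 0 := by
    have houter := (Finset.sum_eq_zero_iff_of_nonneg (fun i _ =>
      Finset.sum_nonneg fun j _ => add_nonneg (hterm1 i j) (hterm2 i j))).mp hsum
    intro i j
    have hinner := (Finset.sum_eq_zero_iff_of_nonneg (fun j _ =>
      add_nonneg (hterm1 i j) (hterm2 i j))).mp (houter i (Finset.mem_univ i))
    exact hinner j (Finset.mem_univ j)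
  have hkey : ∀ i j, 0 < q i j → y' i * x' j = y i * x j := by
    intro i j hq
    have hApos' : 0 < A i j := (hApos i j).mpr hq
    have hTpos : 0 < T i j := mul_pos hApos' (mul_pos (hy i) (hx j))
    have ht1 : T' i j - T i j - T i j * L i j = 0 := by
      have := hzero i j
      have h2 := hterm2 i j
      have h1 := hterm1 i j
      linarith
    have hLzero : L i j = 0 := by
      by_contra hL0
      have hlt := Real.add_one_lt_exp hL0
      have : T i j * (L i j + 1) < T i j * Real.exp (L i j) :=
        (mul_lt_mul_of_pos_left hlt hTpos)
      rw [hTexp i j] at ht1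
      linarith
    have : Real.exp (L i j) = 1 := by rw [hLzero, Real.exp_zero]
    have hexp : (y' i / y i) * (x' j / x j) = 1 := by
      rw [← this, hL, Real.exp_add, Real.exp_sub, Real.exp_sub, Real.exp_log (hy' i),
        Real.exp_log (hy i), Real.exp_log (hx' j), Real.exp_log (hx j)]
    rw [div_mul_div_comm, div_eq_one_iff_eq (ne_of_gt (mul_pos (hy i) (hx j)))] at hexp
    exact hexp
  -- connectivity: the ratio x'/x is constant
  set j0 : Fin M := ⟨0, hM⟩ with hj0
  set γ : ℝ := x' j0 / x j0 with hγ
  have hγpos : 0 < γ := div_pos (hx' j0) (hx j0)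
  have hJ : ∀ j, x' j = γ * x j := by
    by_contra hcon
    push_neg at hcon
    set J : Finset (Fin M) := Finset.univ.filter (fun j => x' j = γ * x j) with hJdef
    have hj0J : j0 ∈ J := by
      refine Finset.mem_filter.mpr ⟨Finset.mem_univ _, ?_⟩
      rw [hγ, div_mul_cancel₀ _ (hx j0).ne']
    have hJne : J.Nonempty := ⟨j0, hj0J⟩
    have hJuniv : J ≠ Finset.univ := by
      intro h
      obtain ⟨j, hj⟩ := hcon
      have : j ∈ J := h ▸ Finset.mem_univ j
      rw [hJdef] at this
      exact hj (by simpa using this)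
    obtain ⟨j, hjJ, l, hlJ, k, hkj, hkl⟩ := hqc J hJne hJuniv
    have e1 := hkey k j hkj
    have e2 := hkey k l hkl
    have hxj : x' j = γ * x j := by
      have := Finset.mem_filter.mp hjJ; exact this.2
    -- from e1 : y' k * x' j = y k * x j and x' j = γ x j  ⟹  y' k = y k / γ
    have hxjne : x j ≠ 0 := (hx j).ne'
    have hyk : y' k = y k / γ := by
      rw [hxj, ← mul_assoc] at e1
      have h2 := mul_right_cancel₀ hxjne e1
      rw [eq_div_iff hγpos.ne']
      exact h2
    have hxl : x' l = γ * x l := by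
      rw [hyk] at e2
      have hyne : y k ≠ 0 := (hy k).ne'
      have e3 : y k * x' l = y k * (γ * x l) := by
        field_simp at e2
        rw [e2]
      exact mul_left_cancel₀ hyne e3
    exact hlJ (Finset.mem_filter.mpr ⟨Finset.mem_univ l, hxl⟩)
  refine ⟨γ, hγpos, hJ, ?_⟩
  intro i
  obtain ⟨j, hqj⟩ := hqrow i
  have e := hkey i j hqj
  rw [hJ j, ← mul_assoc] at e
  have hxne : x j ≠ 0 := (hx j).ne'
  have h2 := mul_right_cancel₀ hxne e
  rw [inv_mul_eq_div, eq_div_iff hγpos.ne']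
  exact h2

theorem chain_bound {N M : ℕ} (q : Fin N → Fin M → ℝ) (hqc : QConnected q)
    (a : Fin N → ℝ) (b : Fin M → ℝ) (R₀ : ℝ) (hR₀ : 0 ≤ R₀)
    (h : ∀ i j, 0 < q i j → |a i + b j| ≤ R₀) (j₀ : Fin M) :
    ∀ j, |b j - b j₀| ≤ 2 * R₀ * M := by
  classical
  have key : ∀ n : ℕ, ∃ J : Finset (Fin M), j₀ ∈ J ∧
      (∀ j ∈ J, |b j - b j₀| ≤ 2 * R₀ * n) ∧ (n + 1 ≤ J.card ∨ J = Finset.univ) := by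
    intro n
    induction n with
    | zero =>
      refine ⟨{j₀}, Finset.mem_singleton_self j₀, ?_, Or.inl (by simp)⟩
      intro j hj
      rw [Finset.mem_singleton] at hj
      subst hj
      simp
    | succ n ih =>
      obtain ⟨J, hj₀J, hb, hcard⟩ := ih
      have hmono : ∀ j ∈ J, |b j - b j₀| ≤ 2 * R₀ * (n + 1 : ℕ) := by
        intro j hj
        refine le_trans (hb j hj) ?_
        push_cast
        nlinarith
      by_cases huniv : J = Finset.univ
      · exact ⟨J, hj₀J, hmono, Or.inr huniv⟩
      · obtain ⟨j, hjJ, l, hlJ, k, hkj, hkl⟩ := hqc J ⟨j₀, hj₀J⟩ huniv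
        refine ⟨insert l J, Finset.mem_insert_of_mem hj₀J, ?_, Or.inl ?_⟩
        · intro j' hj'
          rcases Finset.mem_insert.mp hj' with hj' | hj'
          · subst hj'
            have h1 := h k j' hkl
            have h2 := h k j hkj
            have h3 : |b j' - b j| ≤ 2 * R₀ := by
              rw [abs_le] at h1 h2 ⊢
              constructor <;> linarith [h1.1, h1.2, h2.1, h2.2]
            have h4 := hb j hjJ
            calc |b j' - b j₀| ≤ |b j' - b j| + |b j - b j₀| := abs_sub_le _ _ _
              _ ≤ 2 * R₀ + 2 * R₀ * n := by linarith
              _ = 2 * R₀ * (n + 1 : ℕ) := by push_cast; ring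
          · exact hmono j' hj'
        · rw [Finset.card_insert_of_notMem hlJ]
          rcases hcard with hc | hc
          · omega
          · exact absurd hc huniv
  obtain ⟨J, hj₀J, hb, hcard⟩ := key M
  have hJuniv : J = Finset.univ := by
    rcases hcard with hc | hc
    · have := Finset.card_le_card (Finset.subset_univ J)
      simp [Finset.card_univ] at this
      omega
    · exact hc
  intro j
  have := hb j (hJuniv ▸ Finset.mem_univ j)
  simpa using this

set_option maxHeartbeats 1000000 in
theorem exists_margins {N M : ℕ} (hN : 0 < N) (hM : 0 < M)
    (q A wm : Fin N → Fin M → ℝ)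
    (hA0 : ∀ i j, 0 ≤ A i j)
    (hApos : ∀ i j, (0 < A i j ↔ 0 < q i j))
    (hw0 : ∀ i j, 0 ≤ wm i j)
    (hwpos : ∀ i j, (0 < wm i j ↔ 0 < q i j))
    (hcol : ∀ j, ∑ i, wm i j = 1)
    (hqrow : ∀ i, ∃ j, 0 < q i j)
    (hqc : QConnected q) :
    ∃ (x : Fin M → ℝ) (y : Fin N → ℝ), (∀ j, 0 < x j) ∧ (∀ i, 0 < y i) ∧
      (∀ j, ∑ i, A i j * (y i * x j) = 1) ∧
      (∀ i, ∑ j, A i j * (y i * x j) = ∑ j, wm i j) := by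
  classical
  have hMr : (0:ℝ) < M := by exact_mod_cast hM
  -- zero off support
  have hAz : ∀ i j, ¬ 0 < q i j → A i j = 0 := by
    intro i j hq
    rcases lt_or_eq_of_le (hA0 i j) with h | h
    · exact absurd ((hApos i j).mp h) hq
    · exact h.symm
  have hwz : ∀ i j, ¬ 0 < q i j → wm i j = 0 := by
    intro i j hq
    rcases lt_or_eq_of_le (hw0 i j) with h | h
    · exact absurd ((hwpos i j).mp h) hq
    · exact h.symm
  set F : ((Fin N → ℝ) × (Fin M → ℝ)) → ℝ := fun z =>
    ∑ i, ∑ j, (A i j * Real.exp (z.1 i + z.2 j) - wm i j * (z.1 i + z.2 j)) with hFdef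
  have hFc : Continuous F := by
    apply continuous_finset_sum
    intro i _
    apply continuous_finset_sum
    intro j _
    apply Continuous.sub
    · exact continuous_const.mul ((Real.continuous_exp).comp
        (((continuous_apply i).comp continuous_fst).add ((continuous_apply j).comp continuous_snd)))
    · exact continuous_const.mul
        (((continuous_apply i).comp continuous_fst).add ((continuous_apply j).comp continuous_snd))
  -- quadratic lower bound for exp
  have hexpquad : ∀ u : ℝ, 0 ≤ u → u ^ 2 / 4 ≤ Real.exp u := by
    intro u hu
    have h1 := Real.add_one_le_exp (u / 2)
    have h2 : Real.exp u = Real.exp (u / 2) * Real.exp (u / 2) := by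
      rw [← Real.exp_add]; ring_nf
    nlinarith [Real.exp_pos (u / 2)]
  set B : Fin N → Fin M → ℝ := fun i j => if 0 < A i j then wm i j ^ 2 / A i j else 0 with hBdef
  have hB0 : ∀ i j, 0 ≤ B i j := by
    intro i j
    rw [hBdef]
    dsimp only
    split
    · positivity
    · exact le_refl 0
  -- per-term lower bound
  have hlow : ∀ (u : ℝ) (i : Fin N) (j : Fin M),
      -(B i j) ≤ A i j * Real.exp u - wm i j * u := by
    intro u i j
    by_cases hq : 0 < q i j
    · have hA : 0 < A i j := (hApos i j).mpr hq
      have hw : 0 < wm i j := (hwpos i j).mpr hq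
      have hBv : B i j = wm i j ^ 2 / A i j := by rw [hBdef]; simp [hA]
      rw [hBv]
      rcases le_or_gt u 0 with hu | hu
      · have h1 : 0 ≤ A i j * Real.exp u := by positivity
        have h2 : 0 ≤ -(wm i j * u) := by nlinarith
        have h3 : 0 ≤ wm i j ^ 2 / A i j := by positivity
        linarith
      · have h1 := hexpquad u hu.le
        have h2 : A i j * (u ^ 2 / 4) ≤ A i j * Real.exp u :=
          mul_le_mul_of_nonneg_left h1 hA.le
        have key : 0 ≤ A i j * (u / 2 - wm i j / A i j) ^ 2 := by positivity
        have hexpand : A i j * (u / 2 - wm i j / A i j) ^ 2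
            = A i j * (u ^ 2 / 4) - wm i j * u + wm i j ^ 2 / A i j := by
          field_simp
          ring
        linarith
    · rw [hBdef]
      simp [hAz i j hq, hwz i j hq]
  -- total lower bound constant
  set Btot : ℝ := ∑ i, ∑ j, B i j with hBtotdef
  set C1 : ℝ := F 0 + Btot with hC1def
  have hgF : ∀ z : (Fin N → ℝ) × (Fin M → ℝ),
      F z = ∑ ij : Fin N × Fin M, (A ij.1 ij.2 * Real.exp (z.1 ij.1 + z.2 ij.2)
        - wm ij.1 ij.2 * (z.1 ij.1 + z.2 ij.2)) := by
    intro z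
    rw [hFdef, Fintype.sum_prod_type]
  have hBtot' : Btot = ∑ ij : Fin N × Fin M, B ij.1 ij.2 := by
    rw [hBtotdef, Fintype.sum_prod_type]
  have hterm_le : ∀ z : (Fin N → ℝ) × (Fin M → ℝ), F z ≤ F 0 → ∀ i j,
      A i j * Real.exp (z.1 i + z.2 j) - wm i j * (z.1 i + z.2 j) ≤ C1 := by
    intro z hz i j
    set g : Fin N × Fin M → ℝ := fun ij => A ij.1 ij.2 * Real.exp (z.1 ij.1 + z.2 ij.2)
      - wm ij.1 ij.2 * (z.1 ij.1 + z.2 ij.2) with hgdef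
    have h1 : g (i, j) + ∑ ij ∈ Finset.univ.erase (i, j), g ij = ∑ ij, g ij :=
      Finset.add_sum_erase _ _ (Finset.mem_univ _)
    have h2 : ∑ ij ∈ Finset.univ.erase (i, j), (-(B ij.1 ij.2))
        ≤ ∑ ij ∈ Finset.univ.erase (i, j), g ij :=
      Finset.sum_le_sum fun ij _ => hlow _ ij.1 ij.2
    have h3 : ∑ ij ∈ Finset.univ.erase (i, j), B ij.1 ij.2
        ≤ ∑ ij : Fin N × Fin M, B ij.1 ij.2 :=
      Finset.sum_le_sum_of_subset_of_nonneg (Finset.erase_subset _ _)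
        (fun ij _ _ => hB0 ij.1 ij.2)
    have h4 : ∑ ij ∈ Finset.univ.erase (i, j), (-(B ij.1 ij.2))
        = -(∑ ij ∈ Finset.univ.erase (i, j), B ij.1 ij.2) := by
      rw [Finset.sum_neg_distrib]
    have h5 : ∑ ij, g ij = F z := (hgF z).symm
    have : g (i, j) ≤ F z + Btot := by
      rw [hBtot']
      linarith
    rw [hC1def]
    have hgij : g (i, j) = A i j * Real.exp (z.1 i + z.2 j) - wm i j * (z.1 i + z.2 j) := rfl
    linarith
  -- per-pair coordinate-sum bound
  set m1 : ℝ := max C1 0 with hm1def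
  have hm10 : 0 ≤ m1 := le_max_right _ _
  have hm1C : C1 ≤ m1 := le_max_left _ _
  set R : Fin N → Fin M → ℝ := fun i j =>
    max (max (max 1 (8 * wm i j / A i j)) (8 * m1 / A i j)) (m1 / wm i j) with hRdef
  set R₀ : ℝ := ∑ i, ∑ j, max (R i j) 0 with hR₀def
  have hR₀0 : 0 ≤ R₀ := Finset.sum_nonneg fun i _ => Finset.sum_nonneg fun j _ =>
    le_max_right _ _
  have hRleR₀ : ∀ i j, R i j ≤ R₀ := by
    intro i j
    refine le_trans (le_max_left (R i j) 0) ?_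
    rw [hR₀def]
    calc max (R i j) 0 ≤ ∑ j', max (R i j') 0 :=
          Finset.single_le_sum (f := fun j' => max (R i j') 0)
            (fun j' _ => le_max_right _ _) (Finset.mem_univ j)
      _ ≤ ∑ i', ∑ j', max (R i' j') 0 :=
          Finset.single_le_sum (f := fun i' => ∑ j', max (R i' j') 0)
            (fun i' _ => Finset.sum_nonneg fun j' _ => le_max_right _ _)
            (Finset.mem_univ i)
  have habs : ∀ z : (Fin N → ℝ) × (Fin M → ℝ), F z ≤ F 0 → ∀ i j, 0 < q i j →
      |z.1 i + z.2 j| ≤ R₀ := by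
    intro z hz i j hq
    set u : ℝ := z.1 i + z.2 j with hudef
    have hA : 0 < A i j := (hApos i j).mpr hq
    have hw : 0 < wm i j := (hwpos i j).mpr hq
    have hterm := hterm_le z hz i j
    rw [← hudef] at hterm
    clear_value u
    have hub : u ≤ R i j := by
      by_contra hu
      push_neg at hu
      have e1 : (1:ℝ) ≤ R i j := le_trans (le_max_left _ _)
        (le_trans (le_max_left _ _) (le_max_left _ _))
      have e2 : 8 * wm i j / A i j ≤ R i j := le_trans (le_max_right _ _)
        (le_trans (le_max_left _ _) (le_max_left _ _))
      have e3 : 8 * m1 / A i j ≤ R i j := le_trans (le_max_right _ _) (le_max_left _ _)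
      have h1 : 1 < u := lt_of_le_of_lt e1 hu
      have hupos : 0 < u := lt_trans one_pos h1
      have h2 : 8 * wm i j < u * A i j := (div_lt_iff₀ hA).mp (lt_of_le_of_lt e2 hu)
      have h3 : 8 * m1 < u * A i j := (div_lt_iff₀ hA).mp (lt_of_le_of_lt e3 hu)
      have hq2 := hexpquad u hupos.le
      have s1 : A i j * (u ^ 2 / 4) ≤ A i j * Real.exp u :=
        mul_le_mul_of_nonneg_left hq2 hA.le
      have s2 : wm i j * u < A i j * u ^ 2 / 8 := by
        nlinarith [mul_lt_mul_of_pos_right h2 hupos]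
      have s3 : m1 < A i j * u / 8 := by linarith
      have s4 : A i j * u / 8 ≤ A i j * u ^ 2 / 8 := by
        nlinarith [mul_nonneg (mul_nonneg hA.le hupos.le) (by linarith : (0:ℝ) ≤ u - 1)]
      linarith
    have hlb : -u ≤ R i j := by
      have e4 : m1 / wm i j ≤ R i j := le_max_right _ _
      have h1 : 0 ≤ A i j * Real.exp u := by positivity
      have h2 : wm i j * (-u) ≤ m1 := by nlinarith
      have h3 : -u ≤ m1 / wm i j := by
        rw [le_div_iff₀ hw]
        linarith [mul_comm (wm i j) (-u) ▸ h2]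
      linarith
    rw [abs_le]
    constructor
    · linarith [hRleR₀ i j]
    · linarith [hRleR₀ i j]
  set j₀ : Fin M := ⟨0, hM⟩ with hj₀def
  set Rf : ℝ := R₀ + 4 * R₀ * M + 1 with hRfdef
  have hRf0 : 0 ≤ Rf := by
    rw [hRfdef]
    have : 0 ≤ 4 * R₀ * M := by positivity
    linarith
  have hzb : ∀ z : (Fin N → ℝ) × (Fin M → ℝ), F z ≤ F 0 → (∑ j, z.2 j) = 0 → ‖z‖ ≤ Rf := by
    intro z hz hslice
    have hchain := chain_bound q hqc z.1 z.2 R₀ hR₀0 (habs z hz) j₀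
    have h2R0M : 0 ≤ 2 * R₀ * M := by positivity
    have hbj₀ : |z.2 j₀| ≤ 2 * R₀ * M := by
      have hsum : (M:ℝ) * z.2 j₀ = ∑ j, (z.2 j₀ - z.2 j) := by
        rw [Finset.sum_sub_distrib, hslice, sub_zero, Finset.sum_const, Finset.card_univ,
          Fintype.card_fin, nsmul_eq_mul]
      have habs2 : |(M:ℝ) * z.2 j₀| ≤ ∑ j : Fin M, |z.2 j₀ - z.2 j| :=
        hsum ▸ Finset.abs_sum_le_sum_abs _ _
      have h3 : ∑ j : Fin M, |z.2 j₀ - z.2 j| ≤ ∑ _j : Fin M, 2 * R₀ * M :=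
        Finset.sum_le_sum (fun j _ => by rw [abs_sub_comm]; exact hchain j)
      have h4 : ∑ _j : Fin M, (2 * R₀ * M : ℝ) = M * (2 * R₀ * M) := by
        rw [Finset.sum_const, Finset.card_univ, Fintype.card_fin, nsmul_eq_mul]
      have h5 : (M:ℝ) * |z.2 j₀| ≤ (M:ℝ) * (2 * R₀ * M) := by
        have hMb : (M:ℝ) * |z.2 j₀| = |(M:ℝ) * z.2 j₀| := by
          rw [abs_mul, abs_of_pos hMr]
        rw [hMb]
        exact le_trans habs2 (le_trans h3 (le_of_eq h4))
      exact le_of_mul_le_mul_left h5 hMr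
    have hb : ∀ j, |z.2 j| ≤ 4 * R₀ * M := by
      intro j
      calc |z.2 j| = |(z.2 j - z.2 j₀) + z.2 j₀| := by ring_nf
        _ ≤ |z.2 j - z.2 j₀| + |z.2 j₀| := abs_add_le _ _
        _ ≤ 2 * R₀ * M + 2 * R₀ * M := add_le_add (hchain j) hbj₀
        _ = 4 * R₀ * M := by ring
    have ha : ∀ i, |z.1 i| ≤ R₀ + 4 * R₀ * M := by
      intro i
      obtain ⟨j, hqj⟩ := hqrow i
      have h1 := habs z hz i j hqj
      calc |z.1 i| = |(z.1 i + z.2 j) - z.2 j| := by ring_nf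
        _ ≤ |z.1 i + z.2 j| + |z.2 j| := abs_sub _ _
        _ ≤ R₀ + 4 * R₀ * M := add_le_add h1 (hb j)
    rw [Prod.norm_def]
    apply max_le
    · rw [pi_norm_le_iff_of_nonneg hRf0]
      intro i
      rw [Real.norm_eq_abs]
      have := ha i
      rw [hRfdef]
      linarith
    · rw [pi_norm_le_iff_of_nonneg hRf0]
      intro j
      rw [Real.norm_eq_abs]
      have := hb j
      rw [hRfdef]
      linarith
  set K : Set ((Fin N → ℝ) × (Fin M → ℝ)) :=
    Metric.closedBall 0 Rf ∩ {z | ∑ j, z.2 j = 0} with hKdef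
  have hKcomp : IsCompact K :=
    (isCompact_closedBall _ _).inter_right
      (isClosed_eq (continuous_finset_sum _ fun j _ => (continuous_apply j).comp continuous_snd)
        continuous_const)
  have h0K : (0 : (Fin N → ℝ) × (Fin M → ℝ)) ∈ K :=
    ⟨Metric.mem_closedBall_self hRf0, by simp⟩
  obtain ⟨zs, hzsK, hzsmin⟩ := hKcomp.exists_isMinOn ⟨0, h0K⟩ hFc.continuousOn
  have hmin : ∀ z ∈ K, F zs ≤ F z := fun z hzK => hzsmin hzK
  have hglobal : ∀ z, F zs ≤ F z := by
    intro z
    by_contra hlt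
    push_neg at hlt
    set c : ℝ := (∑ j, z.2 j) / M with hcdef
    set z' : (Fin N → ℝ) × (Fin M → ℝ) := (fun i => z.1 i + c, fun j => z.2 j - c) with hz'def
    have hFinv : F z' = F z := by
      rw [hFdef]
      refine Finset.sum_congr rfl fun i _ => Finset.sum_congr rfl fun j _ => ?_
      have : z'.1 i + z'.2 j = z.1 i + z.2 j := by rw [hz'def]; dsimp; ring
      rw [this]
    have hslice' : (∑ j, z'.2 j) = 0 := by
      rw [hz'def]
      dsimp
      rw [Finset.sum_sub_distrib, Finset.sum_const, Finset.card_univ, Fintype.card_fin,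
        nsmul_eq_mul, hcdef]
      field_simp
      ring
    have hF0 : F zs ≤ F 0 := hmin 0 h0K
    have h1 : F z' ≤ F 0 := by rw [hFinv]; linarith
    have hz'K : z' ∈ K := by
      constructor
      · rw [Metric.mem_closedBall, dist_zero_right]
        exact hzb z' h1 hslice'
      · exact hslice'
    have := hmin z' hz'K
    rw [hFinv] at this
    linarith
  -- row equations from vanishing derivative in the a-directions
  have hrowEq : ∀ i₀, ∑ j, A i₀ j * Real.exp (zs.1 i₀ + zs.2 j) = ∑ j, wm i₀ j := by
    intro i₀
    set φ : ℝ → ℝ := fun t => ∑ i, ∑ j,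
      (A i j * Real.exp ((zs.1 i + (if i = i₀ then t else 0)) + zs.2 j)
        - wm i j * ((zs.1 i + (if i = i₀ then t else 0)) + zs.2 j)) with hφdef
    have hφF : ∀ t, φ t = F (fun i => zs.1 i + (if i = i₀ then t else 0), zs.2) := by
      intro t; rw [hφdef, hFdef]
    have hφ0 : φ 0 = F zs := by
      rw [hφF]
      have h1 : (fun i => zs.1 i + (if i = i₀ then (0:ℝ) else 0)) = zs.1 := by
        funext i; simp
      rw [h1]
    have hφmin : ∀ t, φ 0 ≤ φ t := by
      intro t; rw [hφ0, hφF]; exact hglobal _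
    set D : Fin N → ℝ := fun i =>
      if i = i₀ then (∑ j, (A i j * Real.exp ((zs.1 i + 0) + zs.2 j) - wm i j)) else 0 with hDdef
    have hsum_der : ∀ j : Fin M, HasDerivAt
        (fun t => A i₀ j * Real.exp ((zs.1 i₀ + t) + zs.2 j)
          - wm i₀ j * ((zs.1 i₀ + t) + zs.2 j))
        (A i₀ j * Real.exp ((zs.1 i₀ + 0) + zs.2 j) - wm i₀ j) 0 := by
      intro j
      have hlin : HasDerivAt (fun t : ℝ => (zs.1 i₀ + t) + zs.2 j) 1 0 := by
        simpa using ((hasDerivAt_id (0:ℝ)).const_add (zs.1 i₀)).add_const (zs.2 j)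
      have h1 : HasDerivAt (fun t => Real.exp ((zs.1 i₀ + t) + zs.2 j))
          (Real.exp ((zs.1 i₀ + 0) + zs.2 j)) 0 := by simpa using hlin.exp
      have h2 := (h1.const_mul (A i₀ j)).sub (hlin.const_mul (wm i₀ j))
      exact h2.congr_deriv (by simp)
    have hinner : ∀ i : Fin N, HasDerivAt (fun t => ∑ j,
        (A i j * Real.exp ((zs.1 i + (if i = i₀ then t else 0)) + zs.2 j)
          - wm i j * ((zs.1 i + (if i = i₀ then t else 0)) + zs.2 j))) (D i) 0 := by
      intro i
      by_cases hi : i = i₀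
      · subst hi
        have hfun : (fun t => ∑ j,
            (A i j * Real.exp ((zs.1 i + (if i = i then t else 0)) + zs.2 j)
              - wm i j * ((zs.1 i + (if i = i then t else 0)) + zs.2 j)))
            = (fun t => ∑ j, (A i j * Real.exp ((zs.1 i + t) + zs.2 j)
              - wm i j * ((zs.1 i + t) + zs.2 j))) := by
          funext t; simp
        rw [hfun]
        have hD : D i = ∑ j, (A i j * Real.exp ((zs.1 i + 0) + zs.2 j) - wm i j) := by
          rw [hDdef]; simp
        rw [hD]
        exact HasDerivAt.fun_sum (fun j _ => hsum_der j)
      · have hfun : (fun t => ∑ j,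
            (A i j * Real.exp ((zs.1 i + (if i = i₀ then t else 0)) + zs.2 j)
              - wm i j * ((zs.1 i + (if i = i₀ then t else 0)) + zs.2 j)))
            = (fun _ : ℝ => ∑ j, (A i j * Real.exp ((zs.1 i + 0) + zs.2 j)
              - wm i j * ((zs.1 i + 0) + zs.2 j))) := by
          funext t; simp [hi]
        rw [hfun]
        have hD : D i = 0 := by rw [hDdef]; simp [hi]
        rw [hD]
        exact hasDerivAt_const _ _
    have hder : HasDerivAt φ (∑ i, D i) 0 := by
      rw [hφdef]
      exact HasDerivAt.fun_sum (fun i _ => hinner i)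
    have hloc : IsLocalMin φ 0 := Filter.Eventually.of_forall hφmin
    have hzero := hloc.hasDerivAt_eq_zero hder
    have hDsum : ∑ i, D i = ∑ j, (A i₀ j * Real.exp ((zs.1 i₀ + 0) + zs.2 j) - wm i₀ j) := by
      rw [hDdef]
      rw [Finset.sum_ite_eq' Finset.univ i₀]
      simp
    rw [hDsum, Finset.sum_sub_distrib] at hzero
    have : ∑ j, A i₀ j * Real.exp ((zs.1 i₀ + 0) + zs.2 j) = ∑ j, wm i₀ j := by linarith
    simpa using this
  -- column equations from vanishing derivative in the b-directions
  have hcolEq : ∀ j₁, ∑ i, A i j₁ * Real.exp (zs.1 i + zs.2 j₁) = 1 := by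
    intro j₁
    set φ : ℝ → ℝ := fun t => ∑ i, ∑ j,
      (A i j * Real.exp (zs.1 i + (zs.2 j + (if j = j₁ then t else 0)))
        - wm i j * (zs.1 i + (zs.2 j + (if j = j₁ then t else 0)))) with hφdef
    have hφF : ∀ t, φ t = F (zs.1, fun j => zs.2 j + (if j = j₁ then t else 0)) := by
      intro t; rw [hφdef, hFdef]
    have hφ0 : φ 0 = F zs := by
      rw [hφF]
      have h1 : (fun j => zs.2 j + (if j = j₁ then (0:ℝ) else 0)) = zs.2 := by
        funext j; simp
      rw [h1]
    have hφmin : ∀ t, φ 0 ≤ φ t := by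
      intro t; rw [hφ0, hφF]; exact hglobal _
    have hsum_der : ∀ i : Fin N, HasDerivAt
        (fun t => A i j₁ * Real.exp (zs.1 i + (zs.2 j₁ + t))
          - wm i j₁ * (zs.1 i + (zs.2 j₁ + t)))
        (A i j₁ * Real.exp (zs.1 i + (zs.2 j₁ + 0)) - wm i j₁) 0 := by
      intro i
      have hlin : HasDerivAt (fun t : ℝ => zs.1 i + (zs.2 j₁ + t)) 1 0 := by
        simpa using ((hasDerivAt_id (0:ℝ)).const_add (zs.2 j₁)).const_add (zs.1 i)
      have h1 : HasDerivAt (fun t => Real.exp (zs.1 i + (zs.2 j₁ + t)))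
          (Real.exp (zs.1 i + (zs.2 j₁ + 0))) 0 := by simpa using hlin.exp
      have h2 := (h1.const_mul (A i j₁)).sub (hlin.const_mul (wm i j₁))
      exact h2.congr_deriv (by simp)
    have hinner : ∀ i : Fin N, HasDerivAt (fun t => ∑ j,
        (A i j * Real.exp (zs.1 i + (zs.2 j + (if j = j₁ then t else 0)))
          - wm i j * (zs.1 i + (zs.2 j + (if j = j₁ then t else 0)))))
        (A i j₁ * Real.exp (zs.1 i + (zs.2 j₁ + 0)) - wm i j₁) 0 := by
      intro i
      have : HasDerivAt (fun t => ∑ j,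
          (A i j * Real.exp (zs.1 i + (zs.2 j + (if j = j₁ then t else 0)))
            - wm i j * (zs.1 i + (zs.2 j + (if j = j₁ then t else 0)))))
          (∑ j, (if j = j₁ then A i j * Real.exp (zs.1 i + (zs.2 j + 0)) - wm i j else 0)) 0 := by
        apply HasDerivAt.fun_sum
        intro j _
        by_cases hj : j = j₁
        · subst hj
          simpa using hsum_der i
        · have hfun : (fun t => A i j * Real.exp (zs.1 i + (zs.2 j + (if j = j₁ then t else 0)))
              - wm i j * (zs.1 i + (zs.2 j + (if j = j₁ then t else 0))))
              = (fun _ : ℝ => A i j * Real.exp (zs.1 i + (zs.2 j + 0))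
              - wm i j * (zs.1 i + (zs.2 j + 0))) := by
            funext t; simp [hj]
          rw [hfun, if_neg hj]
          exact hasDerivAt_const _ _
      have hs : ∑ j, (if j = j₁ then A i j * Real.exp (zs.1 i + (zs.2 j + 0)) - wm i j else 0)
          = A i j₁ * Real.exp (zs.1 i + (zs.2 j₁ + 0)) - wm i j₁ := by
        rw [Finset.sum_ite_eq' Finset.univ j₁]
        simp
      rw [hs] at this
      exact this
    have hder : HasDerivAt φ (∑ i, (A i j₁ * Real.exp (zs.1 i + (zs.2 j₁ + 0)) - wm i j₁)) 0 := by
      rw [hφdef]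
      exact HasDerivAt.fun_sum (fun i _ => hinner i)
    have hloc : IsLocalMin φ 0 := Filter.Eventually.of_forall hφmin
    have hzero := hloc.hasDerivAt_eq_zero hder
    rw [Finset.sum_sub_distrib, hcol j₁] at hzero
    have : ∑ i, A i j₁ * Real.exp (zs.1 i + (zs.2 j₁ + 0)) = 1 := by linarith
    simpa using this
  -- conclude
  refine ⟨fun j => Real.exp (zs.2 j), fun i => Real.exp (zs.1 i),
    fun j => Real.exp_pos _, fun i => Real.exp_pos _, ?_, ?_⟩
  · intro j
    have := hcolEq j
    rw [← this]
    refine Finset.sum_congr rfl fun i _ => ?_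
    rw [← Real.exp_add]
  · intro i
    have := hrowEq i
    rw [← this]
    refine Finset.sum_congr rfl fun j _ => ?_
    rw [← Real.exp_add]
set_option maxHeartbeats 1000000 in
theorem stmt17 {N M : ℕ} (hN : 0 < N) (hM : 0 < M)
    (p q : Fin N → Fin M → ℝ)
    (hp : ∀ i j, 0 < p i j)
    (hq0 : ∀ i j, 0 ≤ q i j)
    (hqrow : ∀ i, ∃ j, 0 < q i j)
    (hqcol : ∀ j, ∃ i, 0 < q i j)
    (w wstar : Fin N → Fin M → ℝ)
    (hw : ∀ i j, w i j = p i j * q i j / ∑ n, p n j * q n j)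
    (hwstar : ∀ i j, wstar i j = w i j / ∑ m, w i m) :
    ((∃ (PPP : Fin M → ℝ) (P : Fin N → ℝ),
        (∀ j, 0 < PPP j) ∧ (∀ i, 0 < P i) ∧ IDBSol p w wstar PPP P) ∧
      (∀ (PPP PPP' : Fin M → ℝ) (P P' : Fin N → ℝ),
        (∀ j, 0 < PPP j) → (∀ i, 0 < P i) → IDBSol p w wstar PPP P →
        (∀ j, 0 < PPP' j) → (∀ i, 0 < P' i) → IDBSol p w wstar PPP' P' →
        ∃ γ : ℝ, 0 < γ ∧ (∀ j, PPP' j = γ * PPP j) ∧ (∀ i, P' i = γ⁻¹ * P i)))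
    ↔ QConnected q := by
  classical
  -- basic facts about the weights
  have hden : ∀ j, 0 < ∑ n, p n j * q n j := by
    intro j
    obtain ⟨i, hi⟩ := hqcol j
    exact Finset.sum_pos' (fun n _ => mul_nonneg (hp n j).le (hq0 n j))
      ⟨i, Finset.mem_univ i, mul_pos (hp i j) hi⟩
  have hw0 : ∀ i j, 0 ≤ w i j := by
    intro i j
    rw [hw]
    exact div_nonneg (mul_nonneg (hp i j).le (hq0 i j)) (hden j).le
  have hwiff : ∀ i j, (0 < w i j ↔ 0 < q i j) := by
    intro i j
    constructor
    · intro hwp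
      by_contra hq
      have hq' : q i j = 0 := le_antisymm (not_lt.mp hq) (hq0 i j)
      rw [hw, hq', mul_zero, zero_div] at hwp
      exact lt_irrefl 0 hwp
    · intro hq
      rw [hw]
      exact div_pos (mul_pos (hp i j) hq) (hden j)
  have hwz : ∀ i j, ¬ 0 < q i j → w i j = 0 := by
    intro i j hq
    rcases lt_or_eq_of_le (hw0 i j) with h | h
    · exact absurd ((hwiff i j).mp h) hq
    · exact h.symm
  have hcolw : ∀ j, ∑ i, w i j = 1 := by
    intro j
    have h1 : ∑ i, w i j = ∑ i, p i j * q i j / (∑ n, p n j * q n j) :=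
      Finset.sum_congr rfl fun i _ => hw i j
    rw [h1, ← Finset.sum_div, div_self (hden j).ne']
  have hs : ∀ i, 0 < ∑ m, w i m := by
    intro i
    obtain ⟨j, hj⟩ := hqrow i
    exact Finset.sum_pos' (fun m _ => hw0 i m)
      ⟨j, Finset.mem_univ j, (hwiff i j).mpr hj⟩
  set A : Fin N → Fin M → ℝ := fun i j => w i j / p i j with hAdef
  have hA0 : ∀ i j, 0 ≤ A i j := fun i j => div_nonneg (hw0 i j) (hp i j).le
  have hAiff : ∀ i j, (0 < A i j ↔ 0 < q i j) := by
    intro i j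
    rw [hAdef]
    dsimp only
    rw [div_pos_iff_of_pos_right (hp i j)]
    exact hwiff i j
  have hAz : ∀ i j, ¬ 0 < q i j → A i j = 0 := by
    intro i j hq
    rw [hAdef]
    dsimp only
    rw [hwz i j hq, zero_div]
  -- translation between IDBSol and the margin equations
  have hsol_iff : ∀ (x : Fin M → ℝ) (y : Fin N → ℝ), (∀ j, 0 < x j) → (∀ i, 0 < y i) →
      (IDBSol p w wstar x y ↔
        ((∀ j, ∑ i, A i j * (y i * x j) = 1) ∧
         (∀ i, ∑ j, A i j * (y i * x j) = ∑ m, w i m))) := by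
    intro x y hx hy
    have key1 : ∀ j, (∑ i, A i j * (y i * x j)) = (∑ n, w n j * (y n / p n j)) * x j := by
      intro j
      rw [Finset.sum_mul]
      refine Finset.sum_congr rfl fun i _ => ?_
      rw [hAdef]
      dsimp only
      field_simp
    have key2 : ∀ i, (∑ j, A i j * (y i * x j))
        = (∑ m, wstar i m * (x m / p i m)) * (∑ m, w i m) * y i := by
      intro i
      rw [Finset.sum_mul, Finset.sum_mul]
      refine Finset.sum_congr rfl fun j _ => ?_
      rw [hAdef, hwstar i j]
      dsimp only
      have hsne : (∑ m, w i m) ≠ 0 := (hs i).ne'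
      field_simp [hsne]
    constructor
    · rintro ⟨h1, h2⟩
      constructor
      · intro j
        rw [key1 j, ← h1 j, inv_mul_cancel₀ (hx j).ne']
      · intro i
        rw [key2 i, ← h2 i]
        field_simp
        exact mul_div_cancel_left₀ _ (hy i).ne'
    · rintro ⟨h1, h2⟩
      constructor
      · intro j
        have := h1 j
        rw [key1 j] at this
        exact (eq_inv_of_mul_eq_one_left this).symm
      · intro i
        have := h2 i
        rw [key2 i] at this
        have hsne : (∑ m, w i m) ≠ 0 := (hs i).ne'
        have h3 : (∑ m, w i m) * ((∑ m, wstar i m * (x m / p i m)) * y i)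
            = (∑ m, w i m) * 1 := by linear_combination this
        have h4 := mul_left_cancel₀ hsne h3
        exact (eq_inv_of_mul_eq_one_left h4).symm
  constructor
  · rintro ⟨⟨x, y, hx, hy, hsol⟩, huniq⟩
    intro J hJne hJuniv
    by_contra hcon
    push_neg at hcon
    obtain ⟨hmcol, hmrow⟩ := (hsol_iff x y hx hy).mp hsol
    set x' : Fin M → ℝ := fun j => if j ∈ J then 2 * x j else x j with hx'def
    set y' : Fin N → ℝ := fun i => if ∀ l, l ∉ J → q i l = 0 then y i / 2 else y i with hy'def
    have hx' : ∀ j, 0 < x' j := by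
      intro j
      rw [hx'def]
      dsimp only
      split
      · linarith [hx j]
      · exact hx j
    have hy' : ∀ i, 0 < y' i := by
      intro i
      rw [hy'def]
      dsimp only
      split
      · linarith [hy i]
      · exact hy i
    have hpoint : ∀ i j, A i j * (y' i * x' j) = A i j * (y i * x j) := by
      intro i j
      by_cases hq : 0 < q i j
      · by_cases hjJ : j ∈ J
        · have hcond : ∀ l, l ∉ J → q i l = 0 := by
            intro l hl
            by_contra hne
            have hql : 0 < q i l := lt_of_le_of_ne (hq0 i l) (Ne.symm hne)
            exact absurd hql (not_lt.mpr (hcon j hjJ l hl i hq))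
          rw [hx'def, hy'def]
          dsimp only
          rw [if_pos hcond, if_pos hjJ]
          ring
        · have hcond : ¬ (∀ l, l ∉ J → q i l = 0) := by
            intro hc
            have := hc j hjJ
            rw [this] at hq
            exact lt_irrefl 0 hq
          rw [hx'def, hy'def]
          dsimp only
          rw [if_neg hcond, if_neg hjJ]
      · rw [hAz i j hq]
        ring
    have hsol' : IDBSol p w wstar x' y' := by
      refine (hsol_iff x' y' hx' hy').mpr ⟨?_, ?_⟩
      · intro j
        rw [Finset.sum_congr rfl fun i _ => hpoint i j]
        exact hmcol j
      · intro i
        rw [Finset.sum_congr rfl fun j _ => hpoint i j]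
        exact hmrow i
    obtain ⟨γ, hγpos, hγx, hγy⟩ := huniq x x' y y' hx hy hsol hx' hy' hsol'
    obtain ⟨j, hjJ⟩ := hJne
    have hl : ∃ l, l ∉ J := by
      by_contra h
      push_neg at h
      exact hJuniv (Finset.eq_univ_iff_forall.mpr h)
    obtain ⟨l, hlJ⟩ := hl
    have e1 : 2 * x j = γ * x j := by
      have := hγx j
      rw [hx'def] at this
      dsimp only at this
      rw [if_pos hjJ] at this
      exact this
    have e2 : x l = γ * x l := by
      have := hγx l
      rw [hx'def] at this
      dsimp only at this
      rw [if_neg hlJ] at this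
      exact this
    have hγ2 : γ = 2 := (mul_right_cancel₀ (hx j).ne' e1).symm
    have hγ1 : γ = 1 := by
      have : 1 * x l = γ * x l := by rw [one_mul]; exact e2
      exact (mul_right_cancel₀ (hx l).ne' this).symm
    rw [hγ2] at hγ1
    norm_num at hγ1
  · intro hqc
    constructor
    · obtain ⟨x, y, hx, hy, hcolm, hrowm⟩ :=
        exists_margins hN hM q A w hA0 hAiff hw0 hwiff hcolw hqrow hqc
      exact ⟨x, y, hx, hy, (hsol_iff x y hx hy).mpr ⟨hcolm, hrowm⟩⟩
    · intro PPP PPP' P P' hPPP hP hsol hPPP' hP' hsol'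
      obtain ⟨m1c, m1r⟩ := (hsol_iff PPP P hPPP hP).mp hsol
      obtain ⟨m2c, m2r⟩ := (hsol_iff PPP' P' hPPP' hP').mp hsol'
      exact unique_margins hM q A hAiff hA0 hqrow hqc PPP PPP' P P' hPPP hP hPPP' hP'
        m1c m2c (fun i => by rw [m1r i, m2r i])
end

section
/- Let p be a strictly positive N×M matrix of prices, q a quantity matrix, ρ a nonzero real number, and let w_{ij} = p_{ij} q_{ij} / Σ_{n=1}^N p_{nj} q_{nj} denote expenditure shares and w*_{ij} = w_{ij} / Σ_{m=1}^M w_{im}. Consider the generalized expenditure-share system: PPP_j = (Σ_{n=1}^N w_{nj} (p_{nj}/P_n)^ρ)^{1/ρ} for j = 1,…,M and P_i = (Σ_{m=1}^M w*_{im} (p_{im}/PPP_m)^ρ)^{1/ρ} for i = 1,…,N (which gives the arithmetic index for ρ = 1 and the IDB system for ρ = −1). Then a strictly positive solution (PPP, P), unique up to the rescaling (PPP, P) ↦ (γ·PPP, (1/γ)·P) for γ > 0, exists if and only if the quantity matrix q is connected. -/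
open Finset

lemma exp_lb (A W z : ℝ) (hA : 0 < A) (hW : 0 < W) :
    W * (1 - Real.log (W / A)) ≤ A * Real.exp z - W * z := by
  have h0 : 0 < W / A := div_pos hW hA
  set z0 := Real.log (W / A) with hz0
  have he : Real.exp z0 = W / A := Real.exp_log h0
  have h1 : (z - z0) + 1 ≤ Real.exp (z - z0) := Real.add_one_le_exp _
  have h2 : W * ((z - z0) + 1) ≤ W * Real.exp (z - z0) :=
    mul_le_mul_of_nonneg_left h1 hW.le
  have h3 : W * Real.exp (z - z0) = A * Real.exp z := by
    rw [Real.exp_sub, he]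
    field_simp
  nlinarith [h2, h3]

lemma sq_le_exp (z : ℝ) (hz : 0 ≤ z) : z ^ 2 / 4 ≤ Real.exp z := by
  have h1 : z / 2 + 1 ≤ Real.exp (z / 2) := by
    have := Real.add_one_le_exp (z / 2); linarith
  have h2 : (z / 2 + 1) ^ 2 ≤ (Real.exp (z / 2)) ^ 2 := by
    have : 0 ≤ z / 2 + 1 := by linarith
    exact pow_le_pow_left₀ this h1 2
  have h3 : Real.exp (z / 2) ^ 2 = Real.exp z := by
    rw [← Real.exp_nat_mul]; ring_nf
  nlinarith [h2, h3]

lemma exp_ub (A W B z : ℝ) (hA : 0 < A) (hW : 0 < W)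
    (h : A * Real.exp z - W * z ≤ B) : |z| ≤ max (B / W) (1 + 4 * (W + |B|) / A) := by
  rcases le_or_gt z 0 with hz | hz
  · have hE : 0 < A * Real.exp z := mul_pos hA (Real.exp_pos z)
    have : -(W * z) ≤ B := by linarith
    have hzB : -z ≤ B / W := by
      rw [le_div_iff₀ hW]; nlinarith
    rw [abs_of_nonpos hz]
    exact le_max_of_le_left hzB
  · rw [abs_of_pos hz]
    refine le_max_of_le_right ?_
    by_contra hcon
    push_neg at hcon
    have hz1 : 1 ≤ z := by
      have : 0 ≤ 4 * (W + |B|) / A := by positivity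
      linarith
    have hq : z ^ 2 / 4 ≤ Real.exp z := sq_le_exp z hz.le
    have h4 : A * (z ^ 2 / 4) ≤ A * Real.exp z := mul_le_mul_of_nonneg_left hq hA.le
    have h5 : A * (z ^ 2 / 4) ≤ B + W * z := by linarith
    have hB : B ≤ |B| := le_abs_self B
    have hzz : 4 * (W + |B|) / A < z - 1 + 1 := by linarith
    have hzz' : 4 * (W + |B|) < A * z := by
      rw [div_lt_iff₀ hA] at hzz; nlinarith
    -- A * z^2 / 4 ≤ B + W z ≤ |B| z + W z = (W + |B|) z < A z * z / 4
    nlinarith [mul_lt_mul_of_pos_right hzz' hz, mul_le_mul_of_nonneg_left hz1 (abs_nonneg B)]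

open Finset

lemma closure_univ' {M : ℕ} (adj : Fin M → Fin M → Prop)
    (conn : ∀ J : Finset (Fin M), J.Nonempty → J ≠ Finset.univ →
      ∃ j ∈ J, ∃ l ∉ J, adj j l)
    (E : Finset (Fin M)) (hne : E.Nonempty)
    (hcl : ∀ j ∈ E, ∀ l, adj j l → l ∈ E) : E = Finset.univ := by
  by_contra h
  obtain ⟨j, hj, l, hl, hadj⟩ := conn E hne h
  exact hl (hcl j hj l hadj)

lemma graph_bound {M : ℕ} (adj : Fin M → Fin M → Prop)
    (conn : ∀ J : Finset (Fin M), J.Nonempty → J ≠ Finset.univ →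
      ∃ j ∈ J, ∃ l ∉ J, adj j l)
    (f : Fin M → ℝ) (R : ℝ) (hR : 0 ≤ R)
    (hedge : ∀ j l, adj j l → |f j - f l| ≤ R)
    (j0 : Fin M) : ∀ j, |f j - f j0| ≤ R * M := by
  have key : ∀ t : ℕ, ∃ S : Finset (Fin M), j0 ∈ S ∧
      (∀ j ∈ S, |f j - f j0| ≤ R * t) ∧ (S = Finset.univ ∨ t + 1 ≤ S.card) := by
    intro t
    induction t with
    | zero =>
      refine ⟨{j0}, Finset.mem_singleton_self j0, ?_, Or.inr (by simp)⟩
      intro j hj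
      rw [Finset.mem_singleton] at hj
      simp [hj]
    | succ t ih =>
      obtain ⟨S, hj0, hbd, hcard⟩ := ih
      have hmono : ∀ j ∈ S, |f j - f j0| ≤ R * ((t:ℕ) + 1 : ℕ) := by
        intro j hj
        calc |f j - f j0| ≤ R * t := hbd j hj
        _ ≤ R * ((t:ℕ)+1:ℕ) := by push_cast; nlinarith
      rcases eq_or_ne S Finset.univ with hS | hS
      · exact ⟨S, hj0, hmono, Or.inl hS⟩
      · obtain ⟨j, hj, l, hl, hadj⟩ := conn S ⟨j0, hj0⟩ hS
        refine ⟨insert l S, Finset.mem_insert_of_mem hj0, ?_, Or.inr ?_⟩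
        · intro m hm
          rcases Finset.mem_insert.mp hm with hm | hm
          · subst hm
            calc |f m - f j0| ≤ |f m - f j| + |f j - f j0| := abs_sub_le _ _ _
            _ ≤ R + R * t := by
                have h1 : |f j - f m| ≤ R := hedge j m hadj
                rw [abs_sub_comm] at h1
                exact add_le_add h1 (hbd j hj)
            _ = R * ((t:ℕ)+1:ℕ) := by push_cast; ring
          · exact hmono m hm
        · rw [Finset.card_insert_of_notMem hl]
          rcases hcard with hc | hc
          · exact absurd hc hS
          · omega
  intro j
  obtain ⟨S, hj0, hbd, hcard⟩ := key M
  have hS : S = Finset.univ := by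
    rcases hcard with h | h
    · exact h
    · have := Finset.card_le_univ S
      simp [Finset.card_univ] at this
      omega
  have := hbd j (hS ▸ Finset.mem_univ j)
  simpa using this

open Finset

lemma sinkhorn_exists {N M : ℕ} (hM : 0 < M)
    (A W : Fin M → Fin N → ℝ)
    (hA0 : ∀ j n, 0 ≤ A j n)
    (hW0 : ∀ j n, 0 ≤ W j n)
    (hsupp : ∀ j n, 0 < A j n ↔ 0 < W j n)
    (hcolpos : ∀ n, ∃ j, 0 < W j n)
    (hconn : ∀ J : Finset (Fin M), J.Nonempty → J ≠ Finset.univ →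
      ∃ j ∈ J, ∃ l ∉ J, ∃ n, 0 < W j n ∧ 0 < W l n) :
    ∃ (ξ : Fin M → ℝ) (η : Fin N → ℝ), (∀ j, 0 < ξ j) ∧ (∀ n, 0 < η n) ∧
      (∀ j, ∑ n, A j n * (ξ j * η n) = ∑ n, W j n) ∧
      (∀ n, ∑ j, A j n * (ξ j * η n) = ∑ j, W j n) := by
  classical
  have hWA : ∀ j n, W j n = 0 → A j n = 0 := by
    intro j n h
    by_contra hA
    have : 0 < A j n := (hA0 j n).lt_of_ne (Ne.symm hA)
    rw [hsupp] at this; rw [h] at this; exact lt_irrefl 0 this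
  -- the potential
  set Φ : ((Fin M → ℝ) × (Fin N → ℝ)) → ℝ :=
    fun z => ∑ j, ∑ n, (A j n * Real.exp (z.1 j + z.2 n) - W j n * (z.1 j + z.2 n)) with hΦ
  have hΦcont : Continuous Φ := by
    apply continuous_finset_sum
    intro j _
    apply continuous_finset_sum
    intro n _
    have h1 : Continuous fun z : ((Fin M → ℝ) × (Fin N → ℝ)) => z.1 j + z.2 n :=
      ((continuous_apply j).comp continuous_fst).add ((continuous_apply n).comp continuous_snd)
    exact (continuous_const.mul (Real.continuous_exp.comp h1)).sub (continuous_const.mul h1)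
  -- per-edge lower bounds
  set b : Fin M → Fin N → ℝ :=
    fun j n => if 0 < W j n then min 0 (W j n * (1 - Real.log (W j n / A j n))) else 0 with hb
  have hble : ∀ j n (z : ℝ), b j n ≤ A j n * Real.exp z - W j n * z := by
    intro j n z
    by_cases h : 0 < W j n
    · have hA : 0 < A j n := (hsupp j n).2 h
      have := exp_lb (A j n) (W j n) z hA h
      simp only [hb, if_pos h]
      exact le_trans (min_le_right _ _) this
    · have hWz : W j n = 0 := le_antisymm (not_lt.1 h) (hW0 j n)
      have hAz : A j n = 0 := hWA j n hWz
      simp [hb, h, hWz, hAz]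
  have hbnp : ∀ j n, b j n ≤ 0 := by
    intro j n
    by_cases h : 0 < W j n <;> simp [hb, h]
  -- sublevel set
  have hj0 : Nonempty (Fin M) := ⟨⟨0, hM⟩⟩
  obtain ⟨j0⟩ := hj0
  set B : ℝ := Φ 0 with hB
  set C : Set ((Fin M → ℝ) × (Fin N → ℝ)) := {z | Φ z ≤ B ∧ z.1 j0 = 0} with hC
  have h0C : (0 : (Fin M → ℝ) × (Fin N → ℝ)) ∈ C := ⟨le_refl _, rfl⟩
  set B' : ℝ := B - ∑ j, ∑ n, b j n with hB'
  have hedgeB : ∀ z ∈ C, ∀ j1 n1,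
      A j1 n1 * Real.exp (z.1 j1 + z.2 n1) - W j1 n1 * (z.1 j1 + z.2 n1) ≤ B' := by
    intro z hz j1 n1
    set g : Fin M → Fin N → ℝ :=
      fun j n => A j n * Real.exp (z.1 j + z.2 n) - W j n * (z.1 j + z.2 n) with hg
    have hnn : ∀ j n, 0 ≤ g j n - b j n := fun j n => sub_nonneg.2 (hble j n _)
    have h1 : g j1 n1 - b j1 n1 ≤ ∑ j, ∑ n, (g j n - b j n) := by
      calc g j1 n1 - b j1 n1 ≤ ∑ n, (g j1 n - b j1 n) :=
            Finset.single_le_sum (fun n _ => hnn j1 n) (Finset.mem_univ n1)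
      _ ≤ ∑ j, ∑ n, (g j n - b j n) :=
            Finset.single_le_sum
              (fun j _ => Finset.sum_nonneg fun n _ => hnn j n) (Finset.mem_univ j1)
    have h2 : ∑ j, ∑ n, (g j n - b j n) = Φ z - ∑ j, ∑ n, b j n := by
      simp [hΦ, hg, Finset.sum_sub_distrib]
    have h3 : Φ z ≤ B := hz.1
    have h4 := hbnp j1 n1
    have : g j1 n1 ≤ B' := by rw [hB']; linarith [h1.trans_eq h2]
    exact this
  set Rf : Fin M → Fin N → ℝ :=
    fun j n => max (B' / W j n) (1 + 4 * (W j n + |B'|) / A j n) with hRf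
  set R : ℝ := ∑ j, ∑ n, |Rf j n| with hR
  have hR0 : 0 ≤ R := Finset.sum_nonneg fun j _ =>
    Finset.sum_nonneg fun n _ => abs_nonneg _
  have hRle : ∀ j n, Rf j n ≤ R := by
    intro j n
    calc Rf j n ≤ |Rf j n| := le_abs_self _
    _ ≤ ∑ n', |Rf j n'| := Finset.single_le_sum (f := fun n' => |Rf j n'|) (fun _ _ => abs_nonneg _) (Finset.mem_univ n)
    _ ≤ ∑ j', ∑ n', |Rf j' n'| := Finset.single_le_sum
        (f := fun j' => ∑ n', |Rf j' n'|)
        (fun (j' : Fin M) _ => Finset.sum_nonneg fun _ _ => abs_nonneg _) (Finset.mem_univ j)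
    _ = R := rfl
  have hedgeR : ∀ z ∈ C, ∀ j n, 0 < W j n → |z.1 j + z.2 n| ≤ R := by
    intro z hz j n hWjn
    have hA : 0 < A j n := (hsupp j n).2 hWjn
    exact le_trans (exp_ub _ _ _ _ hA hWjn (hedgeB z hz j n)) (hRle j n)
  have hubd : ∀ z ∈ C, ∀ j, |z.1 j| ≤ 2 * R * M := by
    intro z hz j
    have hgb := graph_bound (fun j l => ∃ n, 0 < W j n ∧ 0 < W l n) hconn z.1 (2 * R)
      (by positivity) ?_ j0 j
    · have hz0 : z.1 j0 = 0 := hz.2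
      rw [hz0, sub_zero] at hgb
      linarith [hgb]
    · rintro j' l ⟨n, h1, h2⟩
      have e1 := hedgeR z hz j' n h1
      have e2 := hedgeR z hz l n h2
      have heq : z.1 j' - z.1 l = (z.1 j' + z.2 n) - (z.1 l + z.2 n) := by ring
      rw [heq]
      calc |(z.1 j' + z.2 n) - (z.1 l + z.2 n)| ≤ |z.1 j' + z.2 n| + |z.1 l + z.2 n| :=
        abs_sub _ _
      _ ≤ 2 * R := by linarith
  have hvbd : ∀ z ∈ C, ∀ n, |z.2 n| ≤ R + 2 * R * M := by
    intro z hz n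
    obtain ⟨j, hj⟩ := hcolpos n
    have h1 := hedgeR z hz j n hj
    have h2 := hubd z hz j
    have heq : z.2 n = (z.1 j + z.2 n) - z.1 j := by ring
    rw [heq]
    calc |(z.1 j + z.2 n) - z.1 j| ≤ |z.1 j + z.2 n| + |z.1 j| := abs_sub _ _
    _ ≤ R + 2 * R * M := by linarith
  have hCbdd : Bornology.IsBounded C := by
    rw [isBounded_iff_forall_norm_le]
    refine ⟨R + 2 * R * M, fun z hz => ?_⟩
    have hr0 : (0:ℝ) ≤ R + 2 * R * M := by positivity
    rw [Prod.norm_def]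
    apply max_le
    · rw [pi_norm_le_iff_of_nonneg hr0]
      intro j
      rw [Real.norm_eq_abs]
      linarith [hubd z hz j]
    · rw [pi_norm_le_iff_of_nonneg hr0]
      intro n
      rw [Real.norm_eq_abs]
      exact hvbd z hz n
  have hCcl : IsClosed C := by
    have h1 : IsClosed {z : (Fin M → ℝ) × (Fin N → ℝ) | Φ z ≤ B} :=
      isClosed_le hΦcont continuous_const
    have h2 : IsClosed {z : (Fin M → ℝ) × (Fin N → ℝ) | z.1 j0 = 0} :=
      isClosed_eq ((continuous_apply j0).comp continuous_fst) continuous_const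
    have : C = {z : (Fin M → ℝ) × (Fin N → ℝ) | Φ z ≤ B} ∩
        {z : (Fin M → ℝ) × (Fin N → ℝ) | z.1 j0 = 0} := by
      ext z; simp [hC, Set.mem_setOf_eq]
    rw [this]
    exact h1.inter h2
  have hCcpt : IsCompact C := Metric.isCompact_of_isClosed_isBounded hCcl hCbdd
  obtain ⟨z, hzC, hzmin⟩ := hCcpt.exists_isMinOn ⟨0, h0C⟩ hΦcont.continuousOn
  have hmin' := isMinOn_iff.mp hzmin
  have hglob : ∀ y, Φ z ≤ Φ y := by
    intro y
    by_cases hy : Φ y ≤ B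
    · set y' : (Fin M → ℝ) × (Fin N → ℝ) :=
        (fun j => y.1 j - y.1 j0, fun n => y.2 n + y.1 j0) with hy'
      have hEq : Φ y' = Φ y := by
        simp only [hΦ]
        refine Finset.sum_congr rfl fun j _ => Finset.sum_congr rfl fun n _ => ?_
        have harg : y'.1 j + y'.2 n = y.1 j + y.2 n := by simp [hy']
        rw [harg]
      have hy'C : y' ∈ C := ⟨hEq ▸ hy, by simp [hy']⟩
      calc Φ z ≤ Φ y' := hmin' y' hy'C
      _ = Φ y := hEq
    · have := hmin' 0 h0C
      push_neg at hy
      linarith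
  -- critical point equations
  have hrow : ∀ j1, ∑ n, A j1 n * Real.exp (z.1 j1 + z.2 n) = ∑ n, W j1 n := by
    intro j1
    set φ : ℝ → ℝ := fun t => ∑ j, ∑ n,
      (A j n * Real.exp ((z.1 j + (if j = j1 then t else 0)) + z.2 n)
        - W j n * ((z.1 j + (if j = j1 then t else 0)) + z.2 n)) with hφ
    have hφval : ∀ t, φ t = Φ (fun j => z.1 j + (if j = j1 then t else 0), z.2) := by
      intro t; rfl
    have hφ0 : φ 0 = Φ z := by
      rw [hφval 0]
      congr 1
      ext j
      · simp
      · simp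
    have hloc : IsLocalMin φ 0 := by
      apply Filter.Eventually.of_forall
      intro t
      rw [hφ0, hφval t]
      exact hglob _
    have hder : HasDerivAt φ
        (∑ j, ∑ n, (if j = j1 then A j n * Real.exp (z.1 j + z.2 n) - W j n else 0)) 0 := by
      apply HasDerivAt.fun_sum
      intro j _
      apply HasDerivAt.fun_sum
      intro n _
      by_cases hj : j = j1
      · subst hj
        simp only [if_pos rfl]
        have hg : HasDerivAt (fun t : ℝ => (z.1 j + t) + z.2 n) 1 0 :=
          ((hasDerivAt_id 0).const_add (z.1 j)).add_const (z.2 n)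
        have hexp := hg.exp
        have := (hexp.const_mul (A j n)).sub (hg.const_mul (W j n))
        convert this using 1
        simp
        rfl
        simp
      · simp only [if_neg hj, add_zero]
        exact hasDerivAt_const 0 _
    have hzero := hloc.hasDerivAt_eq_zero hder
    have hsum : ∑ j, ∑ n, (if j = j1 then A j n * Real.exp (z.1 j + z.2 n) - W j n else 0)
        = ∑ n, (A j1 n * Real.exp (z.1 j1 + z.2 n) - W j1 n) := by
      rw [Finset.sum_eq_single j1]
      · simp
      · intro j _ hj; simp [hj]
      · intro h; exact absurd (Finset.mem_univ j1) h
    rw [hsum] at hzero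
    rw [Finset.sum_sub_distrib] at hzero
    linarith
  have hcol : ∀ n1, ∑ j, A j n1 * Real.exp (z.1 j + z.2 n1) = ∑ j, W j n1 := by
    intro n1
    set φ : ℝ → ℝ := fun t => ∑ j, ∑ n,
      (A j n * Real.exp (z.1 j + (z.2 n + (if n = n1 then t else 0)))
        - W j n * (z.1 j + (z.2 n + (if n = n1 then t else 0)))) with hφ
    have hφval : ∀ t, φ t = Φ (z.1, fun n => z.2 n + (if n = n1 then t else 0)) := by
      intro t; rfl
    have hφ0 : φ 0 = Φ z := by
      rw [hφval 0]
      congr 1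
      ext n
      · simp
      · simp
    have hloc : IsLocalMin φ 0 := by
      apply Filter.Eventually.of_forall
      intro t
      rw [hφ0, hφval t]
      exact hglob _
    have hder : HasDerivAt φ
        (∑ j, ∑ n, (if n = n1 then A j n * Real.exp (z.1 j + z.2 n) - W j n else 0)) 0 := by
      apply HasDerivAt.fun_sum
      intro j _
      apply HasDerivAt.fun_sum
      intro n _
      by_cases hn : n = n1
      · subst hn
        simp only [if_pos rfl]
        have hg : HasDerivAt (fun t : ℝ => z.1 j + (z.2 n + t)) 1 0 :=
          ((hasDerivAt_id 0).const_add (z.2 n)).const_add (z.1 j)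
        have hexp := hg.exp
        have := (hexp.const_mul (A j n)).sub (hg.const_mul (W j n))
        convert this using 1
        simp
        rfl
        simp
      · simp only [if_neg hn, add_zero]
        exact hasDerivAt_const 0 _
    have hzero := hloc.hasDerivAt_eq_zero hder
    have hsum : ∑ j, ∑ n, (if n = n1 then A j n * Real.exp (z.1 j + z.2 n) - W j n else 0)
        = ∑ j, (A j n1 * Real.exp (z.1 j + z.2 n1) - W j n1) := by
      refine Finset.sum_congr rfl fun j _ => ?_
      rw [Finset.sum_eq_single n1]
      · simp
      · intro n _ hn; simp [hn]
      · intro h; exact absurd (Finset.mem_univ n1) h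
    rw [hsum] at hzero
    rw [Finset.sum_sub_distrib] at hzero
    linarith
  refine ⟨fun j => Real.exp (z.1 j), fun n => Real.exp (z.2 n),
    fun j => Real.exp_pos _, fun n => Real.exp_pos _, ?_, ?_⟩
  · intro j
    have := hrow j
    rw [← this]
    refine Finset.sum_congr rfl fun n _ => ?_
    rw [← Real.exp_add]
  · intro n
    have := hcol n
    rw [← this]
    refine Finset.sum_congr rfl fun j _ => ?_
    rw [← Real.exp_add]

open Finset

lemma sinkhorn_unique {N M : ℕ} (hM : 0 < M)
    (A W : Fin M → Fin N → ℝ)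
    (hA0 : ∀ j n, 0 ≤ A j n)
    (hsupp : ∀ j n, 0 < A j n ↔ 0 < W j n)
    (hW0 : ∀ j n, 0 ≤ W j n)
    (hrowpos : ∀ j, ∃ n, 0 < W j n)
    (hcolpos : ∀ n, ∃ j, 0 < W j n)
    (hconn : ∀ J : Finset (Fin M), J.Nonempty → J ≠ Finset.univ →
      ∃ j ∈ J, ∃ l ∉ J, ∃ n, 0 < W j n ∧ 0 < W l n)
    (ξ ξ' : Fin M → ℝ) (η η' : Fin N → ℝ)
    (hξ : ∀ j, 0 < ξ j) (hξ' : ∀ j, 0 < ξ' j)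
    (hη : ∀ n, 0 < η n) (hη' : ∀ n, 0 < η' n)
    (h1 : ∀ j, ∑ n, A j n * (ξ j * η n) = ∑ n, W j n)
    (h2 : ∀ n, ∑ j, A j n * (ξ j * η n) = ∑ j, W j n)
    (h1' : ∀ j, ∑ n, A j n * (ξ' j * η' n) = ∑ n, W j n)
    (h2' : ∀ n, ∑ j, A j n * (ξ' j * η' n) = ∑ j, W j n) :
    ∃ t : ℝ, 0 < t ∧ (∀ j, ξ' j = t * ξ j) ∧ (∀ n, η' n = t⁻¹ * η n) := by
  classical
  obtain ⟨j0, -, hj0max⟩ := Finset.exists_max_image Finset.univ (fun j => ξ' j / ξ j)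
    (Finset.univ_nonempty_iff.2 ⟨⟨0, hM⟩⟩)
  set t : ℝ := ξ' j0 / ξ j0 with ht
  have ht0 : 0 < t := div_pos (hξ' j0) (hξ j0)
  have hle : ∀ j, ξ' j ≤ t * ξ j := by
    intro j
    have := hj0max j (Finset.mem_univ j)
    rw [div_le_div_iff₀ (hξ j) (hξ j0)] at this
    rw [ht, div_mul_eq_mul_div, le_div_iff₀ (hξ j0)]
    linarith
  -- key step: from a maximizer, equality propagates
  have key : ∀ j, ξ' j = t * ξ j →
      ∀ n, 0 < A j n → (η' n = t⁻¹ * η n ∧ ∀ m, 0 < A m n → ξ' m = t * ξ m) := by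
    intro j hjeq
    -- first: η' n ≥ t⁻¹ η n for all n
    have hηge : ∀ n, t⁻¹ * η n ≤ η' n := by
      intro n
      have hT : ∑ m, A m n * (ξ' m * η' n) = ∑ m, A m n * (ξ m * η n) := by
        rw [h2 n, h2' n]
      -- η' n * ∑ A ξ' = η n * ∑ A ξ
      have hTle : ∑ m, A m n * ξ' m ≤ t * ∑ m, A m n * ξ m := by
        rw [Finset.mul_sum]
        refine Finset.sum_le_sum fun m _ => ?_
        have := hle m
        calc A m n * ξ' m ≤ A m n * (t * ξ m) :=
          mul_le_mul_of_nonneg_left this (hA0 m n)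
        _ = t * (A m n * ξ m) := by ring
      have hTpos : 0 < ∑ m, A m n * ξ m := by
        obtain ⟨m, hm⟩ := hcolpos n
        have hAm : 0 < A m n := (hsupp m n).2 hm
        refine Finset.sum_pos' (fun m' _ => mul_nonneg (hA0 m' n) (hξ m').le)
          ⟨m, Finset.mem_univ m, mul_pos hAm (hξ m)⟩
      have hT'pos : 0 < ∑ m, A m n * ξ' m := by
        obtain ⟨m, hm⟩ := hcolpos n
        have hAm : 0 < A m n := (hsupp m n).2 hm
        refine Finset.sum_pos' (fun m' _ => mul_nonneg (hA0 m' n) (hξ' m').le)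
          ⟨m, Finset.mem_univ m, mul_pos hAm (hξ' m)⟩
      have hfact : (∑ m, A m n * ξ' m) * η' n = (∑ m, A m n * ξ m) * η n := by
        have e1 : (∑ m, A m n * ξ' m) * η' n = ∑ m, A m n * (ξ' m * η' n) := by
          rw [Finset.sum_mul]; exact Finset.sum_congr rfl fun m _ => by ring
        have e2 : (∑ m, A m n * ξ m) * η n = ∑ m, A m n * (ξ m * η n) := by
          rw [Finset.sum_mul]; exact Finset.sum_congr rfl fun m _ => by ring
        rw [e1, e2, hT]
      -- η' n = (∑ A ξ) η n / (∑ A ξ')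
      have : η' n = (∑ m, A m n * ξ m) * η n / (∑ m, A m n * ξ' m) := by
        rw [eq_div_iff (ne_of_gt hT'pos)]
        linarith [hfact]
      rw [this]
      rw [le_div_iff₀ hT'pos]
      calc t⁻¹ * η n * ∑ m, A m n * ξ' m ≤ t⁻¹ * η n * (t * ∑ m, A m n * ξ m) := by
            apply mul_le_mul_of_nonneg_left hTle
            exact mul_nonneg (inv_nonneg.2 ht0.le) (hη n).le
      _ = (∑ m, A m n * ξ m) * η n := by
            field_simp
    intro n hAn
    -- equality in row j
    have hrow : ∑ n', A j n' * (ξ' j * η' n') = ∑ n', A j n' * (ξ j * η n') := by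
      rw [h1 j, h1' j]
    have hterm : ∀ n', A j n' * (ξ j * η n') ≤ A j n' * (ξ' j * η' n') := by
      intro n'
      rw [hjeq]
      have h1 : η n' ≤ t * η' n' := by
        have hg := hηge n'
        have := mul_le_mul_of_nonneg_left hg ht0.le
        calc η n' = t * (t⁻¹ * η n') := by field_simp
        _ ≤ t * η' n' := this
      calc A j n' * (ξ j * η n') ≤ A j n' * (ξ j * (t * η' n')) := by
            apply mul_le_mul_of_nonneg_left _ (hA0 j n')
            exact mul_le_mul_of_nonneg_left h1 (hξ j).le
      _ = A j n' * (t * ξ j * η' n') := by ring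
    have heq : ∀ n', A j n' * (ξ j * η n') = A j n' * (ξ' j * η' n') := by
      intro n'
      have := (Finset.sum_eq_sum_iff_of_le fun n' _ => hterm n').1 hrow.symm
      exact this n' (Finset.mem_univ n')
    -- for our n with A j n > 0 : η' n = t⁻¹ η n
    have hηn : η' n = t⁻¹ * η n := by
      have h := heq n
      rw [hjeq] at h
      have hA : A j n ≠ 0 := ne_of_gt hAn
      have hxj : ξ j ≠ 0 := ne_of_gt (hξ j)
      have h2 : ξ j * η n = t * ξ j * η' n := mul_left_cancel₀ hA h
      have h3 : ξ j * η n = ξ j * (t * η' n) := by linear_combination h2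
      have h4 : η n = t * η' n := mul_left_cancel₀ hxj h3
      rw [h4, inv_mul_cancel_left₀ (ne_of_gt ht0)]
    refine ⟨hηn, ?_⟩
    -- column n equality
    intro m hAm
    have hcoln : ∑ m', A m' n * (ξ' m' * η' n) = ∑ m', A m' n * (ξ m' * η n) := by
      rw [h2 n, h2' n]
    have hterm2 : ∀ m', A m' n * (ξ' m' * η' n) ≤ A m' n * (ξ m' * η n) := by
      intro m'
      rw [hηn]
      have := hle m'
      calc A m' n * (ξ' m' * (t⁻¹ * η n)) ≤ A m' n * (t * ξ m' * (t⁻¹ * η n)) := by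
            apply mul_le_mul_of_nonneg_left _ (hA0 m' n)
            apply mul_le_mul_of_nonneg_right this
            exact mul_nonneg (inv_nonneg.2 ht0.le) (hη n).le
      _ = A m' n * (ξ m' * η n) := by
            field_simp
    have heq2 := (Finset.sum_eq_sum_iff_of_le fun m' _ => hterm2 m').1 hcoln
    have hh := heq2 m (Finset.mem_univ m)
    rw [hηn] at hh
    have hA : A m n ≠ 0 := ne_of_gt hAm
    have h4 := mul_left_cancel₀ hA hh
    have h5 : (ξ' m * t⁻¹) * η n = ξ m * η n := by linear_combination h4
    have h6 : ξ' m * t⁻¹ = ξ m := mul_right_cancel₀ (ne_of_gt (hη n)) h5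
    rw [← h6]
    field_simp
  -- the equality set is closed under adjacency, hence everything
  set E : Finset (Fin M) := Finset.univ.filter (fun j => ξ' j = t * ξ j) with hE
  have hj0E : j0 ∈ E := by
    rw [hE, Finset.mem_filter]
    refine ⟨Finset.mem_univ _, ?_⟩
    rw [ht]
    exact (div_mul_cancel₀ (ξ' j0) (ne_of_gt (hξ j0))).symm
  have hEuniv : E = Finset.univ := by
    apply closure_univ' (fun j l => ∃ n, 0 < W j n ∧ 0 < W l n) hconn E ⟨j0, hj0E⟩
    rintro j hj l ⟨n, hn1, hn2⟩
    rw [hE, Finset.mem_filter] at hj ⊢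
    refine ⟨Finset.mem_univ _, ?_⟩
    exact (key j hj.2 n ((hsupp j n).2 hn1)).2 l ((hsupp l n).2 hn2)
  have hall : ∀ j, ξ' j = t * ξ j := by
    intro j
    have : j ∈ E := hEuniv ▸ Finset.mem_univ j
    rw [hE, Finset.mem_filter] at this
    exact this.2
  refine ⟨t, ht0, hall, ?_⟩
  intro n
  obtain ⟨j, hj⟩ := hcolpos n
  exact (key j (hall j) n ((hsupp j n).2 hj)).1

/-- `(PPP, P)` solves the generalized expenditure-share system of order `ρ` with
expenditure-share weights `w` and normalized expenditure-share weights `wstar`. -/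
def GMeanSol {N M : ℕ} (p : Fin N → Fin M → ℝ) (w wstar : Fin N → Fin M → ℝ) (ρ : ℝ)
    (PPP : Fin M → ℝ) (P : Fin N → ℝ) : Prop :=
  (∀ j, PPP j = (∑ n, w n j * (p n j / P n) ^ ρ) ^ (1 / ρ)) ∧
  (∀ i, P i = (∑ m, wstar i m * (p i m / PPP m) ^ ρ) ^ (1 / ρ))


lemma rpow_rpow_inv (a ρ : ℝ) (ha : 0 < a) (hρ : ρ ≠ 0) : (a ^ ρ) ^ (1/ρ) = a := by
  rw [← Real.rpow_mul ha.le, mul_one_div, div_self hρ, Real.rpow_one]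

lemma rpow_inv_rpow (a ρ : ℝ) (ha : 0 < a) (hρ : ρ ≠ 0) : (a ^ (1/ρ)) ^ ρ = a := by
  rw [← Real.rpow_mul ha.le, one_div, inv_mul_cancel₀ hρ, Real.rpow_one]

section Bridge

variable {N M : ℕ} (p q : Fin N → Fin M → ℝ) (ρ : ℝ)
  (w wstar : Fin N → Fin M → ℝ)

lemma wfacts (hp : ∀ i j, 0 < p i j) (hq0 : ∀ i j, 0 ≤ q i j)
    (hqcol : ∀ j, ∃ i, 0 < q i j)
    (hw : ∀ i j, w i j = p i j * q i j / ∑ n, p n j * q n j) :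
    (∀ i j, 0 ≤ w i j) ∧ (∀ i j, (0 < w i j ↔ 0 < q i j)) ∧ (∀ j, ∑ n, w n j = 1) := by
  have hD : ∀ j, 0 < ∑ n, p n j * q n j := by
    intro j
    obtain ⟨i, hi⟩ := hqcol j
    exact Finset.sum_pos' (fun n _ => mul_nonneg (hp n j).le (hq0 n j))
      ⟨i, Finset.mem_univ i, mul_pos (hp i j) hi⟩
  refine ⟨fun i j => ?_, fun i j => ?_, fun j => ?_⟩
  · rw [hw i j]
    exact div_nonneg (mul_nonneg (hp i j).le (hq0 i j)) (hD j).le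
  · rw [hw i j]
    constructor
    · intro h
      by_contra hq
      have : q i j = 0 := le_antisymm (not_lt.1 hq) (hq0 i j)
      rw [this] at h
      simp at h
    · intro h
      exact div_pos (mul_pos (hp i j) h) (hD j)
  · have : ∑ n, w n j = (∑ n, p n j * q n j) / (∑ n, p n j * q n j) := by
      rw [Finset.sum_div]
      exact Finset.sum_congr rfl fun n _ => hw n j
    rw [this, div_self (ne_of_gt (hD j))]

lemma bridge1 (hp : ∀ i j, 0 < p i j) (hq0 : ∀ i j, 0 ≤ q i j)
    (hqrow : ∀ i, ∃ j, 0 < q i j) (hqcol : ∀ j, ∃ i, 0 < q i j)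
    (hρ : ρ ≠ 0)
    (hw : ∀ i j, w i j = p i j * q i j / ∑ n, p n j * q n j)
    (hwstar : ∀ i j, wstar i j = w i j / ∑ m, w i m)
    (PPP : Fin M → ℝ) (P : Fin N → ℝ)
    (hPPP : ∀ j, 0 < PPP j) (hP : ∀ i, 0 < P i)
    (hsol : GMeanSol p w wstar ρ PPP P) :
    (∀ j, ∑ n, (w n j * p n j ^ ρ) * ((PPP j ^ ρ)⁻¹ * (P n ^ ρ)⁻¹) = ∑ n, w n j) ∧
    (∀ n, ∑ j, (w n j * p n j ^ ρ) * ((PPP j ^ ρ)⁻¹ * (P n ^ ρ)⁻¹) = ∑ j, w n j) := by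
  obtain ⟨hw0, hwq, hwsum⟩ := wfacts p q w hp hq0 hqcol hw
  obtain ⟨hs1, hs2⟩ := hsol
  have hterm1 : ∀ n j, w n j * (p n j / P n) ^ ρ = (w n j * p n j ^ ρ) * (P n ^ ρ)⁻¹ := by
    intro n j
    rw [Real.div_rpow (hp n j).le (hP n).le, div_eq_mul_inv]
    ring
  have hx : ∀ j, PPP j ^ ρ = ∑ n, (w n j * p n j ^ ρ) * (P n ^ ρ)⁻¹ := by
    intro j
    have hSpos : 0 < ∑ n, w n j * (p n j / P n) ^ ρ := by
      obtain ⟨n0, hn0⟩ := hqcol j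
      refine Finset.sum_pos' (fun n _ => mul_nonneg (hw0 n j)
        (Real.rpow_nonneg (div_nonneg (hp n j).le (hP n).le) ρ))
        ⟨n0, Finset.mem_univ n0, mul_pos ((hwq n0 j).2 hn0)
          (Real.rpow_pos_of_pos (div_pos (hp n0 j) (hP n0)) ρ)⟩
    rw [hs1 j, rpow_inv_rpow _ ρ hSpos hρ]
    exact Finset.sum_congr rfl fun n _ => hterm1 n j
  -- second system
  have hspos : ∀ n : Fin N, 0 < ∑ m, w n m := by
    intro n
    obtain ⟨m, hm⟩ := hqrow n
    exact Finset.sum_pos' (fun m' _ => hw0 n m')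
      ⟨m, Finset.mem_univ m, (hwq n m).2 hm⟩
  have hterm2 : ∀ (n : Fin N) (m : Fin M),
      wstar n m * (p n m / PPP m) ^ ρ
        = (w n m * p n m ^ ρ) * (PPP m ^ ρ)⁻¹ / (∑ m', w n m') := by
    intro n m
    rw [hwstar n m, Real.div_rpow (hp n m).le (hPPP m).le, div_eq_mul_inv, div_eq_mul_inv,
      div_eq_mul_inv]
    ring
  have hy : ∀ n : Fin N, (∑ m', w n m') * P n ^ ρ = ∑ m, (w n m * p n m ^ ρ) * (PPP m ^ ρ)⁻¹ := by
    intro n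
    have hTpos : 0 < ∑ m, wstar n m * (p n m / PPP m) ^ ρ := by
      obtain ⟨m0, hm0⟩ := hqrow n
      refine Finset.sum_pos' (fun m _ => mul_nonneg ?_
        (Real.rpow_nonneg (div_nonneg (hp n m).le (hPPP m).le) ρ))
        ⟨m0, Finset.mem_univ m0, mul_pos ?_
          (Real.rpow_pos_of_pos (div_pos (hp n m0) (hPPP m0)) ρ)⟩
      · rw [hwstar n m]
        exact div_nonneg (hw0 n m) (hspos n).le
      · rw [hwstar n m0]
        exact div_pos ((hwq n m0).2 hm0) (hspos n)
    rw [hs2 n, rpow_inv_rpow _ ρ hTpos hρ, Finset.mul_sum]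
    refine Finset.sum_congr rfl fun m _ => ?_
    rw [hterm2 n m, ← mul_div_assoc, mul_comm (∑ m', w n m') _, mul_div_assoc,
      div_self (ne_of_gt (hspos n)), mul_one]
  constructor
  · intro j
    have hxpos : 0 < PPP j ^ ρ := Real.rpow_pos_of_pos (hPPP j) ρ
    have e : ∑ n, (w n j * p n j ^ ρ) * ((PPP j ^ ρ)⁻¹ * (P n ^ ρ)⁻¹)
        = (PPP j ^ ρ)⁻¹ * ∑ n, (w n j * p n j ^ ρ) * (P n ^ ρ)⁻¹ := by
      rw [Finset.mul_sum]
      exact Finset.sum_congr rfl fun n _ => by ring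
    rw [e, ← hx j, inv_mul_cancel₀ (ne_of_gt hxpos), hwsum j]
  · intro n
    have hypos : 0 < P n ^ ρ := Real.rpow_pos_of_pos (hP n) ρ
    have e : ∑ j, (w n j * p n j ^ ρ) * ((PPP j ^ ρ)⁻¹ * (P n ^ ρ)⁻¹)
        = (P n ^ ρ)⁻¹ * ∑ j, (w n j * p n j ^ ρ) * (PPP j ^ ρ)⁻¹ := by
      rw [Finset.mul_sum]
      exact Finset.sum_congr rfl fun j _ => by ring
    have hyne : P n ^ ρ ≠ 0 := ne_of_gt hypos
    rw [e, ← hy n, ← mul_assoc, mul_comm ((P n ^ ρ)⁻¹) _, mul_assoc,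
      inv_mul_cancel₀ hyne, mul_one]

lemma bridge2 (hp : ∀ i j, 0 < p i j) (hq0 : ∀ i j, 0 ≤ q i j)
    (hqrow : ∀ i, ∃ j, 0 < q i j) (hqcol : ∀ j, ∃ i, 0 < q i j)
    (hρ : ρ ≠ 0)
    (hw : ∀ i j, w i j = p i j * q i j / ∑ n, p n j * q n j)
    (hwstar : ∀ i j, wstar i j = w i j / ∑ m, w i m)
    (ξ : Fin M → ℝ) (η : Fin N → ℝ)
    (hξ : ∀ j, 0 < ξ j) (hη : ∀ n, 0 < η n)
    (e1 : ∀ j, ∑ n, (w n j * p n j ^ ρ) * (ξ j * η n) = ∑ n, w n j)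
    (e2 : ∀ n, ∑ j, (w n j * p n j ^ ρ) * (ξ j * η n) = ∑ j, w n j) :
    GMeanSol p w wstar ρ (fun j => (ξ j)⁻¹ ^ (1/ρ)) (fun n => (η n)⁻¹ ^ (1/ρ)) := by
  obtain ⟨hw0, hwq, hwsum⟩ := wfacts p q w hp hq0 hqcol hw
  have hspos : ∀ n : Fin N, 0 < ∑ m, w n m := by
    intro n
    obtain ⟨m, hm⟩ := hqrow n
    exact Finset.sum_pos' (fun m' _ => hw0 n m')
      ⟨m, Finset.mem_univ m, (hwq n m).2 hm⟩
  constructor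
  · intro j
    have hPn : ∀ n : Fin N, ((η n)⁻¹ ^ (1/ρ)) ^ ρ = (η n)⁻¹ :=
      fun n => rpow_inv_rpow _ ρ (inv_pos.2 (hη n)) hρ
    have hterm : ∀ n, w n j * (p n j / (η n)⁻¹ ^ (1/ρ)) ^ ρ
        = (w n j * p n j ^ ρ) * η n := by
      intro n
      rw [Real.div_rpow (hp n j).le (Real.rpow_nonneg (inv_pos.2 (hη n)).le _), hPn n,
        div_eq_mul_inv, inv_inv]
      ring
    have hsum : ∑ n, w n j * (p n j / (η n)⁻¹ ^ (1/ρ)) ^ ρ = (ξ j)⁻¹ := by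
      have h := e1 j
      rw [hwsum j] at h
      have e : ∑ n, (w n j * p n j ^ ρ) * (ξ j * η n)
          = ξ j * ∑ n, (w n j * p n j ^ ρ) * η n := by
        rw [Finset.mul_sum]
        exact Finset.sum_congr rfl fun n _ => by ring
      rw [e] at h
      have hne : ξ j ≠ 0 := ne_of_gt (hξ j)
      have : ∑ n, (w n j * p n j ^ ρ) * η n = (ξ j)⁻¹ := by
        calc ∑ n, (w n j * p n j ^ ρ) * η n
            = (ξ j)⁻¹ * (ξ j * ∑ n, (w n j * p n j ^ ρ) * η n) := by
              rw [inv_mul_cancel_left₀ hne]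
        _ = (ξ j)⁻¹ := by rw [h, mul_one]
      rw [← this]
      exact Finset.sum_congr rfl fun n _ => hterm n
    rw [hsum]
  · intro n
    have hQm : ∀ m : Fin M, ((ξ m)⁻¹ ^ (1/ρ)) ^ ρ = (ξ m)⁻¹ :=
      fun m => rpow_inv_rpow _ ρ (inv_pos.2 (hξ m)) hρ
    have hterm : ∀ m, wstar n m * (p n m / (ξ m)⁻¹ ^ (1/ρ)) ^ ρ
        = (w n m * p n m ^ ρ) * ξ m / (∑ m', w n m') := by
      intro m
      rw [hwstar n m, Real.div_rpow (hp n m).le (Real.rpow_nonneg (inv_pos.2 (hξ m)).le _),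
        hQm m, div_inv_eq_mul, div_eq_mul_inv, div_eq_mul_inv]
      ring
    have hsum : ∑ m, wstar n m * (p n m / (ξ m)⁻¹ ^ (1/ρ)) ^ ρ = (η n)⁻¹ := by
      have h := e2 n
      have e : ∑ j, (w n j * p n j ^ ρ) * (ξ j * η n)
          = η n * ∑ m, (w n m * p n m ^ ρ) * ξ m := by
        rw [Finset.mul_sum]
        exact Finset.sum_congr rfl fun m _ => by ring
      rw [e] at h
      have h2 : ∑ m, (w n m * p n m ^ ρ) * ξ m = (∑ m', w n m') * (η n)⁻¹ := by
        have hne : η n ≠ 0 := ne_of_gt (hη n)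
        rw [← h, mul_comm (η n), mul_assoc, mul_inv_cancel₀ hne, mul_one]
      calc ∑ m, wstar n m * (p n m / (ξ m)⁻¹ ^ (1/ρ)) ^ ρ
          = ∑ m, (w n m * p n m ^ ρ) * ξ m / (∑ m', w n m') := by
            exact Finset.sum_congr rfl fun m _ => hterm m
      _ = (∑ m, (w n m * p n m ^ ρ) * ξ m) / (∑ m', w n m') := by
            rw [Finset.sum_div]
      _ = (η n)⁻¹ := by
            rw [h2, mul_comm, mul_div_assoc, div_self (ne_of_gt (hspos n)), mul_one]
    rw [hsum]

end Bridge

theorem stmt18 {N M : ℕ} (hN : 0 < N) (hM : 0 < M)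
    (p q : Fin N → Fin M → ℝ) (ρ : ℝ)
    (hp : ∀ i j, 0 < p i j)
    (hq0 : ∀ i j, 0 ≤ q i j)
    (hqrow : ∀ i, ∃ j, 0 < q i j)
    (hqcol : ∀ j, ∃ i, 0 < q i j)
    (hρ : ρ ≠ 0)
    (w wstar : Fin N → Fin M → ℝ)
    (hw : ∀ i j, w i j = p i j * q i j / ∑ n, p n j * q n j)
    (hwstar : ∀ i j, wstar i j = w i j / ∑ m, w i m) :
    ((∃ (PPP : Fin M → ℝ) (P : Fin N → ℝ),
        (∀ j, 0 < PPP j) ∧ (∀ i, 0 < P i) ∧ GMeanSol p w wstar ρ PPP P) ∧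
      (∀ (PPP PPP' : Fin M → ℝ) (P P' : Fin N → ℝ),
        (∀ j, 0 < PPP j) → (∀ i, 0 < P i) → GMeanSol p w wstar ρ PPP P →
        (∀ j, 0 < PPP' j) → (∀ i, 0 < P' i) → GMeanSol p w wstar ρ PPP' P' →
        ∃ γ : ℝ, 0 < γ ∧ (∀ j, PPP' j = γ * PPP j) ∧ (∀ i, P' i = γ⁻¹ * P i)))
    ↔ QConnected q := by
  classical
  obtain ⟨hw0, hwq, hwsum⟩ := wfacts p q w hp hq0 hqcol hw
  have wzero : ∀ (n : Fin N) (j : Fin M), ¬ 0 < q n j → w n j = 0 := by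
    intro n j hq
    have : ¬ 0 < w n j := fun h => hq ((hwq n j).1 h)
    exact le_antisymm (not_lt.1 this) (hw0 n j)
  have hrec : ∀ (PPP : Fin M → ℝ), (∀ j, 0 < PPP j) → ∀ j,
      ((PPP j ^ ρ)⁻¹)⁻¹ ^ (1/ρ) = PPP j := by
    intro PPP hPPP j
    rw [inv_inv]
    exact rpow_rpow_inv _ _ (hPPP j) hρ
  constructor
  · rintro ⟨⟨PPP, P, hPPP, hP, hsol⟩, huniq⟩
    by_contra hnc
    rw [QConnected] at hnc
    push_neg at hnc
    obtain ⟨J, hJne, hJuniv, hbad⟩ := hnc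
    obtain ⟨he1, he2⟩ := bridge1 p q ρ w wstar hp hq0 hqrow hqcol hρ hw hwstar PPP P hPPP hP hsol
    set ξ' : Fin M → ℝ := fun j => if j ∈ J then 2 * (PPP j ^ ρ)⁻¹ else (PPP j ^ ρ)⁻¹
      with hξ'def
    set η' : Fin N → ℝ := fun n => if (∃ j ∈ J, 0 < q n j) then 2⁻¹ * (P n ^ ρ)⁻¹
      else (P n ^ ρ)⁻¹ with hη'def
    have hξ'pos : ∀ j, 0 < ξ' j := by
      intro j
      simp only [hξ'def]
      by_cases hj : j ∈ J
      · rw [if_pos hj]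
        exact mul_pos two_pos (inv_pos.2 (Real.rpow_pos_of_pos (hPPP j) ρ))
      · rw [if_neg hj]
        exact inv_pos.2 (Real.rpow_pos_of_pos (hPPP j) ρ)
    have hη'pos : ∀ n, 0 < η' n := by
      intro n
      simp only [hη'def]
      by_cases hn : (∃ j ∈ J, 0 < q n j)
      · rw [if_pos hn]
        exact mul_pos (by norm_num) (inv_pos.2 (Real.rpow_pos_of_pos (hP n) ρ))
      · rw [if_neg hn]
        exact inv_pos.2 (Real.rpow_pos_of_pos (hP n) ρ)
    have he1' : ∀ j, ∑ n, (w n j * p n j ^ ρ) * (ξ' j * η' n) = ∑ n, w n j := by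
      intro j
      rw [← he1 j]
      refine Finset.sum_congr rfl fun n _ => ?_
      by_cases hqn : 0 < q n j
      · by_cases hj : j ∈ J
        · have hKn : (∃ j' ∈ J, 0 < q n j') := ⟨j, hj, hqn⟩
          simp only [hξ'def, hη'def]
          rw [if_pos hj, if_pos hKn]
          ring
        · have hKn : ¬ (∃ j' ∈ J, 0 < q n j') := by
            rintro ⟨j'', hj'', hq''⟩
            exact absurd hqn (not_lt.2 (hbad j'' hj'' j hj n hq''))
          simp only [hξ'def, hη'def]
          rw [if_neg hj, if_neg hKn]
      · rw [wzero n j hqn]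
        ring
    have he2' : ∀ n, ∑ j, (w n j * p n j ^ ρ) * (ξ' j * η' n) = ∑ j, w n j := by
      intro n
      rw [← he2 n]
      refine Finset.sum_congr rfl fun j _ => ?_
      by_cases hqn : 0 < q n j
      · by_cases hKn : (∃ j' ∈ J, 0 < q n j')
        · have hj : j ∈ J := by
            by_contra hj
            obtain ⟨j'', hj'', hq''⟩ := hKn
            exact absurd hqn (not_lt.2 (hbad j'' hj'' j hj n hq''))
          simp only [hξ'def, hη'def]
          rw [if_pos hj, if_pos hKn]
          ring
        · have hj : j ∉ J := fun hj => hKn ⟨j, hj, hqn⟩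
          simp only [hξ'def, hη'def]
          rw [if_neg hj, if_neg hKn]
      · rw [wzero n j hqn]
        ring
    have hsol' := bridge2 p q ρ w wstar hp hq0 hqrow hqcol hρ hw hwstar ξ' η'
      hξ'pos hη'pos he1' he2'
    obtain ⟨γ, hγ0, hγ1, hγ2⟩ := huniq PPP (fun j => (ξ' j)⁻¹ ^ (1/ρ))
      P (fun n => (η' n)⁻¹ ^ (1/ρ)) hPPP hP hsol
      (fun j => Real.rpow_pos_of_pos (inv_pos.2 (hξ'pos j)) _)
      (fun n => Real.rpow_pos_of_pos (inv_pos.2 (hη'pos n)) _) hsol'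
    obtain ⟨j1, hj1⟩ := hJne
    obtain ⟨l, hl⟩ : ∃ l, l ∉ J := by
      by_contra hc
      push_neg at hc
      exact hJuniv (Finset.eq_univ_iff_forall.2 hc)
    have hl2 : (ξ' l)⁻¹ ^ (1/ρ) = γ * PPP l := hγ1 l
    have hξ'l : ξ' l = (PPP l ^ ρ)⁻¹ := by simp only [hξ'def]; rw [if_neg hl]
    rw [hξ'l, hrec PPP hPPP l] at hl2
    have hγeq1 : γ = 1 := by
      have hne := ne_of_gt (hPPP l)
      have h' : γ * PPP l = 1 * PPP l := by rw [one_mul, ← hl2]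
      exact mul_right_cancel₀ hne h'
    have hj2 : (ξ' j1)⁻¹ ^ (1/ρ) = γ * PPP j1 := hγ1 j1
    have hξ'j1 : ξ' j1 = 2 * (PPP j1 ^ ρ)⁻¹ := by simp only [hξ'def]; rw [if_pos hj1]
    have hsplit : (ξ' j1)⁻¹ ^ (1/ρ) = ((2:ℝ)⁻¹) ^ (1/ρ) * PPP j1 := by
      rw [hξ'j1, mul_inv,
        Real.mul_rpow (by norm_num) (inv_pos.2 (inv_pos.2 (Real.rpow_pos_of_pos (hPPP j1) ρ))).le,
        hrec PPP hPPP j1]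
    rw [hsplit, hγeq1, one_mul] at hj2
    have hfin : ((2:ℝ)⁻¹) ^ (1/ρ) = 1 := by
      have h' : ((2:ℝ)⁻¹) ^ (1/ρ) * PPP j1 = 1 * PPP j1 := by rw [one_mul]; exact hj2
      exact mul_right_cancel₀ (ne_of_gt (hPPP j1)) h'
    have hlog := congrArg Real.log hfin
    rw [Real.log_rpow (by norm_num), Real.log_one] at hlog
    have hlog2 : Real.log ((2:ℝ)⁻¹) ≠ 0 := by
      rw [Real.log_inv]
      exact neg_ne_zero.2 (ne_of_gt (Real.log_pos one_lt_two))
    exact (mul_ne_zero (one_div_ne_zero hρ) hlog2) hlog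
  · intro hconn
    have hconnW : ∀ J : Finset (Fin M), J.Nonempty → J ≠ Finset.univ →
        ∃ j ∈ J, ∃ l ∉ J, ∃ n, 0 < w n j ∧ 0 < w n l := by
      intro J h1 h2
      obtain ⟨j, hj, l, hl, k, hk1, hk2⟩ := hconn J h1 h2
      exact ⟨j, hj, l, hl, k, (hwq k j).2 hk1, (hwq k l).2 hk2⟩
    have hA0 : ∀ (j : Fin M) (n : Fin N), 0 ≤ w n j * p n j ^ ρ :=
      fun j n => mul_nonneg (hw0 n j) (Real.rpow_nonneg (hp n j).le ρ)
    have hAW : ∀ (j : Fin M) (n : Fin N), 0 < w n j * p n j ^ ρ ↔ 0 < w n j := by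
      intro j n
      constructor
      · intro h
        by_contra hw'
        have hz : w n j = 0 := le_antisymm (not_lt.1 hw') (hw0 n j)
        rw [hz, zero_mul] at h
        exact lt_irrefl 0 h
      · intro h
        exact mul_pos h (Real.rpow_pos_of_pos (hp n j) ρ)
    have hrowposW : ∀ (j : Fin M), ∃ n, 0 < w n j := by
      intro j
      obtain ⟨i, hi⟩ := hqcol j
      exact ⟨i, (hwq i j).2 hi⟩
    have hcolposW : ∀ (n : Fin N), ∃ j, 0 < w n j := by
      intro n
      obtain ⟨m, hm⟩ := hqrow n
      exact ⟨m, (hwq n m).2 hm⟩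
    constructor
    · obtain ⟨ξ, η, hξ, hη, e1, e2⟩ := sinkhorn_exists hM
        (fun j n => w n j * p n j ^ ρ) (fun j n => w n j) hA0
        (fun j n => hw0 n j) hAW hcolposW hconnW
      exact ⟨fun j => (ξ j)⁻¹ ^ (1/ρ), fun n => (η n)⁻¹ ^ (1/ρ),
        fun j => Real.rpow_pos_of_pos (inv_pos.2 (hξ j)) _,
        fun n => Real.rpow_pos_of_pos (inv_pos.2 (hη n)) _,
        bridge2 p q ρ w wstar hp hq0 hqrow hqcol hρ hw hwstar ξ η hξ hη e1 e2⟩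
    · intro PPP PPP' P P' hPPP hP hsol hPPP' hP' hsol'
      obtain ⟨he1, he2⟩ := bridge1 p q ρ w wstar hp hq0 hqrow hqcol hρ hw hwstar
        PPP P hPPP hP hsol
      obtain ⟨he1', he2'⟩ := bridge1 p q ρ w wstar hp hq0 hqrow hqcol hρ hw hwstar
        PPP' P' hPPP' hP' hsol'
      obtain ⟨t, ht0, hξeq, hηeq⟩ := sinkhorn_unique hM
        (fun j n => w n j * p n j ^ ρ) (fun j n => w n j) hA0 hAW
        (fun j n => hw0 n j) hrowposW hcolposW hconnW
        (fun j => (PPP j ^ ρ)⁻¹) (fun j => (PPP' j ^ ρ)⁻¹)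
        (fun n => (P n ^ ρ)⁻¹) (fun n => (P' n ^ ρ)⁻¹)
        (fun j => inv_pos.2 (Real.rpow_pos_of_pos (hPPP j) ρ))
        (fun j => inv_pos.2 (Real.rpow_pos_of_pos (hPPP' j) ρ))
        (fun n => inv_pos.2 (Real.rpow_pos_of_pos (hP n) ρ))
        (fun n => inv_pos.2 (Real.rpow_pos_of_pos (hP' n) ρ))
        he1 he2 he1' he2'
      refine ⟨(t ^ (1/ρ))⁻¹, inv_pos.2 (Real.rpow_pos_of_pos ht0 _), ?_, ?_⟩
      · intro j
        have h := hξeq j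
        have h2 : PPP' j ^ ρ = t⁻¹ * PPP j ^ ρ := by
          rw [← inv_inv (PPP' j ^ ρ), h, mul_inv, inv_inv]
        have h3 := congrArg (fun x : ℝ => x ^ (1/ρ)) h2
        rw [rpow_rpow_inv (PPP' j) ρ (hPPP' j) hρ] at h3
        rw [h3, Real.mul_rpow (inv_pos.2 ht0).le (Real.rpow_pos_of_pos (hPPP j) ρ).le,
          rpow_rpow_inv (PPP j) ρ (hPPP j) hρ, Real.inv_rpow ht0.le]
      · intro n
        have h := hηeq n
        have h2 : P' n ^ ρ = t * P n ^ ρ := by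
          rw [← inv_inv (P' n ^ ρ), h, mul_inv, inv_inv, inv_inv]
        have h3 := congrArg (fun x : ℝ => x ^ (1/ρ)) h2
        rw [rpow_rpow_inv (P' n) ρ (hP' n) hρ] at h3
        rw [h3, Real.mul_rpow ht0.le (Real.rpow_pos_of_pos (hP n) ρ).le,
          rpow_rpow_inv (P n) ρ (hP n) hρ, inv_inv]
end
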